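/- If M and N are simple λ-terms that do not match eventually, i.e. it is not the case that cBT(M) and cBT(N) have the same underlying Böhm Tree with equal annotations at all annotated positions of length ≥ ℓ for some ℓ ∈ ℕ, then M ≠β N. -/

import Mathlib

/-- Untyped λ-terms in de Bruijn notation (the variables are `ℕ`). -/
inductive Lam : Type
  | var : ℕ → Lam
  | app : Lam → Lam → Lam
  | abs : Lam → Lam
  deriving DecidableEq

namespace Lam

/-- Shift the free de Bruijn indices `≥ d` up by one. -/
def lift (d : ℕ) : Lam → Lam
  | var n => if n < d then var n else var (n + 1)
  | app s t => app (lift d s) (lift d t)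
  | abs t => abs (lift (d + 1) t)

/-- Capture-avoiding substitution `t[k := u]`. -/
def subst : Lam → ℕ → Lam → Lam
  | var n, k, u => if n < k then var n else if n = k then u else var (n - 1)
  | app s t, k, u => app (subst s k u) (subst t k u)
  | abs t, k, u => abs (subst t (k + 1) (lift 0 u))

/-- One-step β-reduction `→β`: the compatible closure of the β-rule. -/
inductive Beta : Lam → Lam → Prop
  | beta (t u : Lam) : Beta (Lam.app (Lam.abs t) u) (subst t 0 u)
  | appL {s s' : Lam} (t : Lam) : Beta s s' → Beta (Lam.app s t) (Lam.app s' t)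
  | appR (s : Lam) {t t' : Lam} : Beta t t' → Beta (Lam.app s t) (Lam.app s t')
  | abs {t t' : Lam} : Beta t t' → Beta (Lam.abs t) (Lam.abs t')

/-- `↠β`: the reflexive–transitive closure of `→β`. -/
def BetaStar : Lam → Lam → Prop := Relation.ReflTransGen Beta

/-- `→β^k`: the `k`-fold composition of `→β`. -/
def BetaN : ℕ → Lam → Lam → Prop
  | 0, s, t => s = t
  | k + 1, s, t => ∃ u, Beta s u ∧ BetaN k u t

/-- `=β`, β-convertibility: the equivalence closure of `→β`. -/
inductive Conv : Lam → Lam → Prop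
  | rel {s t : Lam} : Beta s t → Conv s t
  | refl (s : Lam) : Conv s s
  | symm {s t : Lam} : Conv s t → Conv t s
  | trans {s t u : Lam} : Conv s t → Conv t u → Conv s u

/-- The free variables of a term (as de Bruijn indices). -/
def FV : Lam → Finset ℕ
  | var n => {n}
  | app s t => FV s ∪ FV t
  | abs t => ((FV t).erase 0).image (· - 1)

/-- `Y` is a fixed point combinator (fpc): `Y x =β x (Y x)` for a variable `x` not free in `Y`. -/
def IsFPC (Y : Lam) : Prop :=
  ∀ x : ℕ, x ∉ FV Y → Conv (app Y (var x)) (app (var x) (app Y (var x)))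

/-- `I = λx.x` -/
def combI : Lam := abs (var 0)

/-- `S = λxyz.xz(yz)` -/
def combS : Lam := abs (abs (abs (app (app (var 2) (var 0)) (app (var 1) (var 0)))))

/-- `B = λxyz.x(yz)` -/
def combB : Lam := abs (abs (abs (app (var 2) (app (var 1) (var 0)))))

/-- `δ = λab.b(ab)` -/
def delta : Lam := abs (abs (app (var 0) (app (var 1) (var 0))))

/-- `η = λxf.f(xxf)` -/
def etaC : Lam := abs (abs (app (var 0) (app (app (var 1) (var 1)) (var 0))))

/-- Curry's fpc `Y₀ = λf.(λx.f(xx))(λx.f(xx))` -/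
def curryY : Lam :=
  abs (app (abs (app (var 1) (app (var 0) (var 0))))
    (abs (app (var 1) (app (var 0) (var 0)))))

/-- `A B ⋯ B`: `A` applied to `n` copies of `B`, associating to the left. -/
def appN (A B : Lam) : ℕ → Lam
  | 0 => A
  | n + 1 => app (appN A B n) B

/-- `M N₁ ⋯ Nₘ`: `M` applied to the terms in `L`, associating to the left. -/
def appList (M : Lam) (L : List Lam) : Lam := L.foldl app M

/-- `M` is an abstraction. -/
def IsAbs : Lam → Prop
  | abs _ => True
  | _ => False

/-- A head reduction step:
    `λx₁…xₙ.(λy.M)N N₁…Nₘ →h λx₁…xₙ.M[y:=N] N₁…Nₘ`. -/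
inductive HeadStep : Lam → Lam → Prop
  | beta (t u : Lam) : HeadStep (Lam.app (Lam.abs t) u) (subst t 0 u)
  | app {s s' : Lam} (t : Lam) : ¬ IsAbs s → HeadStep s s' → HeadStep (Lam.app s t) (Lam.app s' t)
  | abs {t t' : Lam} : HeadStep t t' → HeadStep (Lam.abs t) (Lam.abs t')

/-- `→h^k`: `k`-fold head reduction. -/
def HeadSteps : ℕ → Lam → Lam → Prop
  | 0, s, t => s = t
  | k + 1, s, t => ∃ u, HeadStep s u ∧ HeadSteps k u t

/-- `λ^n.t`: `n` abstractions in front of `t`. -/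
def absN : ℕ → Lam → Lam
  | 0, t => t
  | n + 1, t => abs (absN n t)

/-- The head normal form `λx₁…xₙ. y A₁ ⋯ Aₘ` (de Bruijn head variable `y`). -/
def mkHnf (n y : ℕ) (args : List Lam) : Lam := absN n (appList (var y) args)

/-- Head normal forms. -/
def IsHnf (M : Lam) : Prop := ∃ n y args, M = mkHnf n y args

/-- `M` has a head normal form (its head reduction reaches an hnf). -/
def HasHnf (M : Lam) : Prop := ∃ k H, HeadSteps k M H ∧ IsHnf H

/-- Nodes of a (clocked) Böhm Tree, seen as an infinite λ⊥-term. -/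
inductive BTN : Type
  | lam : BTN
  | app : BTN
  | var : ℕ → BTN
  | bot : BTN
  deriving DecidableEq

/-- `CBT M p o a`: in the clocked Böhm Tree of `M`, the position `p`
    (a sequence over `{0,1,2}`: `0` descends under an abstraction, `1` and `2` to the
    left and right parts of an application) carries the node `o` with annotation `a`
    (`a = some k` exactly at the roots of the coinductive blocks, where `k` is the number
    of head reduction steps needed to reach the hnf producing that block). -/
inductive CBT : Lam → List ℕ → BTN → Option ℕ → Prop
  | bot {M : Lam} : ¬ HasHnf M → CBT M [] BTN.bot none
  | lam {M : Lam} {k n y : ℕ} {args : List Lam} {i : ℕ} :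
      HeadSteps k M (mkHnf n y args) → i < n →
      CBT M (List.replicate i 0) BTN.lam (if i = 0 then some k else none)
  | app {M : Lam} {k n y : ℕ} {args : List Lam} {j : ℕ} :
      HeadSteps k M (mkHnf n y args) → j < args.length →
      CBT M (List.replicate n 0 ++ List.replicate j 1) BTN.app
        (if n = 0 ∧ j = 0 then some k else none)
  | var {M : Lam} {k n y : ℕ} {args : List Lam} :
      HeadSteps k M (mkHnf n y args) →
      CBT M (List.replicate n 0 ++ List.replicate args.length 1) (BTN.var y)
        (if n = 0 ∧ args.length = 0 then some k else none)
  | child {M : Lam} {k n y : ℕ} {args : List Lam} {i : ℕ} {q : List ℕ} {o : BTN} {a : Option ℕ} :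
      HeadSteps k M (mkHnf n y args) → (h : i < args.length) →
      CBT (args.get ⟨i, h⟩) q o a →
      CBT M (List.replicate n 0 ++ List.replicate (args.length - 1 - i) 1 ++ 2 :: q) o a

/-- The underlying (annotation-free) Böhm Tree: node `o` at position `p`. -/
def BTNode (M : Lam) (p : List ℕ) (o : BTN) : Prop := ∃ a, CBT M p o a

/-- `cBT M` and `cBT N` have the same underlying (annotation-free) Böhm Tree. -/
def SameBT (M N : Lam) : Prop := ∀ (p : List ℕ) (o : BTN), BTNode M p o ↔ BTNode N p o

/-- At every position of length `≥ l` where both clocked Böhm Trees are annotated,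
    the annotation of `cBT M` is `≤` the annotation of `cBT N`. -/
def AnnLeFrom (l : ℕ) (M N : Lam) : Prop :=
  ∀ (p : List ℕ) (o₁ o₂ : BTN) (k₁ k₂ : ℕ), l ≤ p.length →
    CBT M p o₁ (some k₁) → CBT N p o₂ (some k₂) → k₁ ≤ k₂

/-- At every position of length `≥ l` where both clocked Böhm Trees are annotated,
    the annotations of `cBT M` and `cBT N` are equal. -/
def AnnEqFrom (l : ℕ) (M N : Lam) : Prop :=
  ∀ (p : List ℕ) (o₁ o₂ : BTN) (k₁ k₂ : ℕ), l ≤ p.length →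
    CBT M p o₁ (some k₁) → CBT N p o₂ (some k₂) → k₁ = k₂

/-- `cBT M ≤ cBT N`: same underlying Böhm Tree and pointwise `≤` on annotations;
    i.e. `M` improves `N` globally. -/
def CBTle (M N : Lam) : Prop := SameBT M N ∧ AnnLeFrom 0 M N

/-- `M` improves `N` eventually. -/
def ImprovesEventually (M N : Lam) : Prop := SameBT M N ∧ ∃ l, AnnLeFrom l M N

/-- `M` matches `N` eventually. -/
def MatchesEventually (M N : Lam) : Prop := SameBT M N ∧ ∃ l, AnnEqFrom l M N

/-- Number of occurrences of the variable (de Bruijn index) `k` in a term. -/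
def occ (k : ℕ) : Lam → ℕ
  | var n => if n = k then 1 else 0
  | app s t => occ k s + occ k t
  | abs t => occ (k + 1) t

/-- β-normal forms. -/
def IsNormalForm (M : Lam) : Prop := ∀ N, ¬ Beta M N

/-- A head reduction step contracting a *simple* redex `(λx.M)N`,
    i.e. one that is linear (`x` occurs at most once in `M`) or
    call-by-value (`N` is a normal form). -/
inductive SimpleHeadStep : Lam → Lam → Prop
  | beta (t u : Lam) : occ 0 t ≤ 1 ∨ IsNormalForm u →
      SimpleHeadStep (Lam.app (Lam.abs t) u) (subst t 0 u)
  | app {s s' : Lam} (t : Lam) : ¬ IsAbs s → SimpleHeadStep s s' →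
      SimpleHeadStep (Lam.app s t) (Lam.app s' t)
  | abs {t t' : Lam} : SimpleHeadStep t t' → SimpleHeadStep (Lam.abs t) (Lam.abs t')

/-- Simple terms: the largest set `X` such that for `M ∈ X`, either `M` has no hnf,
    or the head reduction of `M` to hnf `λx₁…xₙ.y M₁…Mₘ` contracts only simple
    redexes and `M₁,…,Mₘ ∈ X`. -/
def SimpleTerm (M : Lam) : Prop :=
  ∃ X : Lam → Prop, X M ∧
    ∀ N, X N → ¬ HasHnf N ∨
      ∃ n y args, Relation.ReflTransGen SimpleHeadStep N (mkHnf n y args) ∧ ∀ A ∈ args, X A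


section Calc
set_option linter.dupNamespace false
set_option linter.unreachableTactic false
set_option linter.unusedTactic false

attribute [simp] lift subst

theorem lift_lift (t : Lam) : ∀ d e, d ≤ e → lift d (lift e t) = lift (e+1) (lift d t) := by
  induction t with
  | var n => intro d e h; simp only [lift]; split_ifs <;> simp only [lift] <;> split_ifs <;>
      first | rfl | omega
  | app s t ihs iht => intro d e h; simp only [lift, ihs d e h, iht d e h]
  | abs t iht => intro d e h; simp only [lift]; rw [iht (d+1) (e+1) (by omega)]

theorem subst_lift (t : Lam) : ∀ k u, subst (lift k t) k u = t := by
  induction t with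
  | var n => intro k u; simp only [lift]; split_ifs <;> simp only [subst] <;> split_ifs <;>
      first | rfl | omega | (exfalso; omega)
  | app s t ihs iht => intro k u; simp only [lift, subst, ihs, iht]
  | abs t iht => intro k u; simp only [lift, subst, iht]

theorem lift_subst (t : Lam) : ∀ d k u, d ≤ k →
    lift d (subst t k u) = subst (lift d t) (k+1) (lift d u) := by
  induction t with
  | var n => intro d k u h; simp only [subst]; split_ifs <;> simp only [lift] <;> split_ifs <;>
      simp only [subst] <;> split_ifs <;> first | rfl | omega | (congr 1; omega)
  | app s t ihs iht => intro d k u h; simp only [lift, subst, ihs _ _ _ h, iht _ _ _ h]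
  | abs t iht => intro d k u h; simp only [lift, subst]
                 rw [iht (d+1) (k+1) (lift 0 u) (by omega), lift_lift u 0 d (by omega)]

theorem lift_subst_hi (t : Lam) : ∀ d k u, k ≤ d →
    lift d (subst t k u) = subst (lift (d+1) t) k (lift d u) := by
  induction t with
  | var n => intro d k u h; simp only [subst]; split_ifs <;> simp only [lift] <;> split_ifs <;>
      simp only [subst] <;> split_ifs <;> first | rfl | omega | (congr 1; omega)
  | app s t ihs iht => intro d k u h; simp only [lift, subst, ihs _ _ _ h, iht _ _ _ h]
  | abs t iht => intro d k u h; simp only [lift, subst]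
                 rw [iht (d+1) (k+1) (lift 0 u) (by omega), lift_lift u 0 d (by omega)]

theorem subst_subst (t : Lam) : ∀ j K u v, j ≤ K →
    subst (subst t j u) K v = subst (subst t (K+1) (lift j v)) j (subst u K v) := by
  induction t with
  | var n =>
      intro j K u v h
      simp only [subst]
      split_ifs <;> (try simp only [subst]) <;> (try split_ifs) <;>
        first | rfl | omega | (rw [subst_lift]) | (congr 1; omega) | (exfalso; omega)
  | app s t ihs iht => intro j K u v h; simp only [subst, ihs _ _ _ _ h, iht _ _ _ _ h]
  | abs t iht =>
      intro j K u v h; simp only [subst]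
      rw [iht (j+1) (K+1) (lift 0 u) (lift 0 v) (by omega),
          lift_lift v 0 j (by omega), lift_subst u 0 K v (by omega)]

theorem subst_subst0 (B C : Lam) (k : ℕ) (u : Lam) :
    subst (subst B 0 C) k u = subst (subst B (k+1) (lift 0 u)) 0 (subst C k u) :=
  subst_subst B 0 k C u (by omega)

end Calc

section P2

/-! ### occ and lift/subst -/

theorem occ_lift (t : Lam) : ∀ d x, occ (if x < d then x else x + 1) (lift d t) = occ x t := by
  induction t with
  | var n => intro d x; simp only [lift, occ]; split_ifs <;> simp only [occ] <;> split_ifs <;>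
      first | rfl | omega
  | app s t ihs iht => intro d x; simp only [lift, occ, ihs, iht]
  | abs t iht => intro d x; simp only [lift, occ]
                 have := iht (d+1) (x+1)
                 split_ifs at this ⊢ <;> simp_all <;> omega

theorem occ_lift_lt (t : Lam) (d x : ℕ) (h : x < d) : occ x (lift d t) = occ x t := by
  have := occ_lift t d x; rwa [if_pos h] at this

theorem occ_lift_ge (t : Lam) (d x : ℕ) (h : d ≤ x) : occ (x+1) (lift d t) = occ x t := by
  have := occ_lift t d x; rwa [if_neg (by omega)] at this

theorem occ_lift_self (t : Lam) : ∀ d, occ d (lift d t) = 0 := by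
  induction t with
  | var n => intro d; simp only [lift]; split_ifs <;> simp only [occ] <;> split_ifs <;>
      first | rfl | omega
  | app s t ihs iht => intro d; simp only [lift, occ, ihs, iht]
  | abs t iht => intro d; simp only [lift, occ, iht]

theorem occ_subst_lt (t : Lam) : ∀ k u x, x < k →
    occ x (subst t k u) = occ x t + occ k t * occ x u := by
  induction t with
  | var n => intro k u x h; simp only [subst, occ]; split_ifs <;> (try simp only [occ]) <;>
      (try split_ifs) <;> omega
  | app s t ihs iht => intro k u x h; simp only [subst, occ, ihs _ _ _ h, iht _ _ _ h]; ring
  | abs t iht => intro k u x h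
                 simp only [subst, occ, iht (k+1) (lift 0 u) (x+1) (by omega),
                   occ_lift_ge u 0 x (by omega)]

/-! ### Beta basics -/

theorem beta_lift {t t' : Lam} (h : Beta t t') : ∀ d, Beta (lift d t) (lift d t') := by
  induction h with
  | beta B C => intro d; simp only [Lam.lift]
                rw [lift_subst_hi B d 0 C (by omega)]
                exact Beta.beta _ _
  | appL t _ ih => intro d; exact Beta.appL _ (ih d)
  | appR s _ ih => intro d; exact Beta.appR _ (ih d)
  | abs _ ih => intro d; exact Beta.abs (ih (d+1))

theorem beta_subst_left {t t' : Lam} (h : Beta t t') : ∀ k u, Beta (subst t k u) (subst t' k u) := by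
  induction h with
  | beta B C => intro k u; simp only [Lam.subst]
                rw [subst_subst0]
                exact Beta.beta _ _
  | appL t _ ih => intro k u; exact Beta.appL _ (ih k u)
  | appR s _ ih => intro k u; exact Beta.appR _ (ih k u)
  | abs _ ih => intro k u; exact Beta.abs (ih (k+1) (Lam.lift 0 u))

theorem beta_lift_inv : ∀ (t : Lam) (d : ℕ) (X : Lam), Beta (lift d t) X →
    ∃ t', X = lift d t' ∧ Beta t t' := by
  intro t
  induction t with
  | var n => intro d X h; simp only [Lam.lift] at h; split_ifs at h <;> cases h
  | app s t ihs iht =>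
      intro d X h
      simp only [Lam.lift] at h
      generalize hs : Lam.lift d s = LS at h
      cases h with
      | beta B C =>
          cases s with
          | var n => simp only [Lam.lift] at hs; split_ifs at hs <;> cases hs
          | app a b => simp only [Lam.lift] at hs; cases hs
          | abs s0 =>
              simp only [Lam.lift] at hs
              cases hs
              refine ⟨subst s0 0 t, ?_, Beta.beta _ _⟩
              rw [lift_subst_hi s0 d 0 t (by omega)]
      | appL t h' =>
          subst hs
          obtain ⟨s', rfl, hsb⟩ := ihs d _ h'; exact ⟨app s' t, rfl, Beta.appL _ hsb⟩
      | appR s h' =>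
          subst hs
          obtain ⟨t', rfl, ht⟩ := iht d _ h'; exact ⟨app s t', rfl, Beta.appR _ ht⟩
  | abs t iht =>
      intro d X h
      simp only [Lam.lift] at h
      cases h with
      | abs h' => obtain ⟨t', rfl, ht⟩ := iht (d+1) _ h'; exact ⟨abs t', rfl, Beta.abs ht⟩

/-! ### normal forms -/

theorem nf_var (n : ℕ) : IsNormalForm (var n) := by intro N h; cases h

theorem nf_abs_iff (t : Lam) : IsNormalForm (abs t) ↔ IsNormalForm t := by
  constructor
  · intro h N hN; exact h (abs N) (Beta.abs hN)
  · intro h N hN; cases hN with | abs h' => exact h _ h'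

theorem nf_app_inv {s t : Lam} (h : IsNormalForm (app s t)) :
    ¬ IsAbs s ∧ IsNormalForm s ∧ IsNormalForm t := by
  refine ⟨?_, ?_, ?_⟩
  · intro habs; cases s with
    | abs s0 => exact h _ (Beta.beta s0 t)
    | var n => exact habs
    | app a b => exact habs
  · intro N hN; exact h _ (Beta.appL _ hN)
  · intro N hN; exact h _ (Beta.appR _ hN)

theorem nf_app_build {s t : Lam} (h1 : ¬ IsAbs s) (h2 : IsNormalForm s) (h3 : IsNormalForm t) :
    IsNormalForm (app s t) := by
  intro N hN
  cases hN with
  | beta B C => exact h1 trivial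
  | appL _ h' => exact h2 _ h'
  | appR _ h' => exact h3 _ h'

theorem nf_lift_iff (t : Lam) (d : ℕ) : IsNormalForm (lift d t) ↔ IsNormalForm t := by
  constructor
  · intro h N hN; exact h _ (beta_lift hN d)
  · intro h N hN; obtain ⟨t', _, ht⟩ := beta_lift_inv t d N hN; exact h _ ht

theorem nf_subst_pull {C : Lam} : ∀ k Q, 1 ≤ occ k C → IsNormalForm (subst C k Q) →
    IsNormalForm Q := by
  induction C with
  | var n =>
      intro k Q h1 h2
      simp only [occ] at h1
      by_cases he : n = k
      · subst he; simpa [Lam.subst] using h2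
      · rw [if_neg he] at h1; omega
  | app s t ihs iht =>
      intro k Q h1 h2
      simp only [occ] at h1
      simp only [subst] at h2
      obtain ⟨-, hs, ht⟩ := nf_app_inv h2
      rcases Nat.lt_or_ge 0 (occ k s) with h | h
      · exact ihs k Q h hs
      · exact iht k Q (by omega) ht
  | abs t iht =>
      intro k Q h1 h2
      simp only [occ] at h1
      simp only [subst] at h2
      have := iht (k+1) (lift 0 Q) h1 ((nf_abs_iff _).1 h2)
      exact (nf_lift_iff Q 0).1 this

theorem nf_subst_back {C : Lam} (k : ℕ) (Q : Lam) (h : IsNormalForm (subst C k Q)) :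
    IsNormalForm C := by
  intro N hN; exact h _ (beta_subst_left hN k Q)

/-! ### star congruences -/

theorem star_appL {s s' : Lam} (t : Lam) (h : BetaStar s s') : BetaStar (app s t) (app s' t) := by
  induction h with
  | refl => exact Relation.ReflTransGen.refl
  | tail _ h2 ih => exact ih.tail (Beta.appL _ h2)

theorem star_appR (s : Lam) {t t' : Lam} (h : BetaStar t t') : BetaStar (app s t) (app s t') := by
  induction h with
  | refl => exact Relation.ReflTransGen.refl
  | tail _ h2 ih => exact ih.tail (Beta.appR _ h2)

theorem star_abs {t t' : Lam} (h : BetaStar t t') : BetaStar (abs t) (abs t') := by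
  induction h with
  | refl => exact Relation.ReflTransGen.refl
  | tail _ h2 ih => exact ih.tail (Beta.abs h2)

theorem star_lift {t t' : Lam} (d : ℕ) (h : BetaStar t t') : BetaStar (lift d t) (lift d t') := by
  induction h with
  | refl => exact Relation.ReflTransGen.refl
  | tail _ h2 ih => exact ih.tail (beta_lift h2 d)

theorem star_subst_left {t t' : Lam} (k : ℕ) (u : Lam) (h : BetaStar t t') :
    BetaStar (subst t k u) (subst t' k u) := by
  induction h with
  | refl => exact Relation.ReflTransGen.refl
  | tail _ h2 ih => exact ih.tail (beta_subst_left h2 k u)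

theorem star_subst_right : ∀ (t : Lam) (k : ℕ) {u u' : Lam}, BetaStar u u' →
    BetaStar (subst t k u) (subst t k u') := by
  intro t
  induction t with
  | var n => intro k u u' h; simp only [subst]; split_ifs <;>
      first | exact Relation.ReflTransGen.refl | exact h
  | app s t ihs iht =>
      intro k u u' h
      exact Relation.ReflTransGen.trans (star_appL _ (ihs k h)) (star_appR _ (iht k h))
  | abs t iht => intro k u u' h; exact star_abs (iht (k+1) (star_lift 0 h))

theorem star_subst {t t' u u' : Lam} (k : ℕ) (h1 : BetaStar t t') (h2 : BetaStar u u') :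
    BetaStar (subst t k u) (subst t' k u') :=
  Relation.ReflTransGen.trans (star_subst_left k u h1) (star_subst_right t' k h2)

end P2

section P3

/-! ### Parallel reduction and confluence -/

inductive Par : Lam → Lam → Prop
  | var (n : ℕ) : Par (var n) (var n)
  | app {s s' t t' : Lam} : Par s s' → Par t t' → Par (app s t) (app s' t')
  | abs {t t' : Lam} : Par t t' → Par (abs t) (abs t')
  | beta {s s' t t' : Lam} : Par s s' → Par t t' → Par (app (abs s) t) (subst s' 0 t')

theorem par_refl : ∀ t : Lam, Par t t := by
  intro t; induction t with
  | var n => exact Par.var n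
  | app s t ihs iht => exact Par.app ihs iht
  | abs t iht => exact Par.abs iht

theorem beta_par {t u : Lam} (h : Beta t u) : Par t u := by
  induction h with
  | beta B C => exact Par.beta (par_refl B) (par_refl C)
  | appL t _ ih => exact Par.app ih (par_refl t)
  | appR s _ ih => exact Par.app (par_refl s) ih
  | abs _ ih => exact Par.abs ih

theorem par_star {t u : Lam} (h : Par t u) : BetaStar t u := by
  induction h with
  | var n => exact Relation.ReflTransGen.refl
  | app _ _ ihs iht => exact Relation.ReflTransGen.trans (star_appL _ ihs) (star_appR _ iht)
  | abs _ iht => exact star_abs iht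
  | beta _ _ ihs iht =>
      refine Relation.ReflTransGen.tail (b := app (abs _) _) ?_ (Beta.beta _ _)
      exact Relation.ReflTransGen.trans (star_appL _ (star_abs ihs)) (star_appR _ iht)

theorem par_lift {t t' : Lam} (h : Par t t') : ∀ d, Par (lift d t) (lift d t') := by
  induction h with
  | var n => intro d; simp only [Lam.lift]; split_ifs <;> apply Par.var
  | app _ _ ihs iht => intro d; exact Par.app (ihs d) (iht d)
  | abs _ iht => intro d; exact Par.abs (iht (d+1))
  | beta _ _ ihs iht =>
      intro d; simp only [Lam.lift]
      rw [lift_subst_hi _ d 0 _ (by omega)]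
      exact Par.beta (ihs (d+1)) (iht d)

theorem par_subst {t t' : Lam} (h : Par t t') :
    ∀ k {u u' : Lam}, Par u u' → Par (subst t k u) (subst t' k u') := by
  induction h with
  | var n => intro k u u' hu; simp only [Lam.subst]; split_ifs <;>
      first | apply Par.var | exact hu
  | app _ _ ihs iht => intro k u u' hu; exact Par.app (ihs k hu) (iht k hu)
  | abs _ iht => intro k u u' hu; exact Par.abs (iht (k+1) (par_lift hu 0))
  | beta _ _ ihs iht =>
      intro k u u' hu; simp only [Lam.subst]
      rw [subst_subst0]
      exact Par.beta (ihs (k+1) (par_lift hu 0)) (iht k hu)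

def cd : Lam → Lam
  | var n => var n
  | abs t => abs (cd t)
  | app (abs s) t => subst (cd s) 0 (cd t)
  | app (var n) t => app (var n) (cd t)
  | app (app a b) t => app (cd (app a b)) (cd t)

theorem par_abs_inv {t X : Lam} (h : Par (abs t) X) : ∃ t', X = abs t' ∧ Par t t' := by
  cases h with
  | abs h' => exact ⟨_, rfl, h'⟩

theorem par_cd {t u : Lam} (h : Par t u) : Par u (cd t) := by
  induction h with
  | var n => exact Par.var n
  | abs _ iht => exact Par.abs iht
  | @app s s' t t' hs ht ihs iht =>
      cases s with
      | var n =>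
          cases hs with
          | var => exact Par.app (Par.var n) iht
      | app a b => exact Par.app ihs iht
      | abs s0 =>
          obtain ⟨s0', rfl, hs0⟩ := par_abs_inv hs
          simp only [cd]
          have ihs' : Par (abs s0') (abs (cd s0)) := by simpa [cd] using ihs
          cases ihs' with
          | abs h' => exact Par.beta h' iht
  | @beta s s' t t' hs ht ihs iht =>
      simp only [cd]
      exact par_subst ihs 0 iht

theorem par_diamond {t u v : Lam} (h1 : Par t u) (h2 : Par t v) :
    ∃ w, Par u w ∧ Par v w :=
  ⟨cd t, par_cd h1, par_cd h2⟩

theorem par_strip {t u : Lam} (h : Par t u) {v : Lam} (h2 : Relation.ReflTransGen Par t v) :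
    ∃ w, Relation.ReflTransGen Par u w ∧ Par v w := by
  induction h2 with
  | refl => exact ⟨u, Relation.ReflTransGen.refl, h⟩
  | tail _ hbc ih =>
      obtain ⟨w, hw1, hw2⟩ := ih
      obtain ⟨w', hw1', hw2'⟩ := par_diamond hw2 hbc
      exact ⟨w', hw1.tail hw1', hw2'⟩

theorem par_confl {t u v : Lam} (h1 : Relation.ReflTransGen Par t u)
    (h2 : Relation.ReflTransGen Par t v) : ∃ w, Relation.ReflTransGen Par u w ∧
      Relation.ReflTransGen Par v w := by
  induction h1 with
  | refl => exact ⟨v, h2, Relation.ReflTransGen.refl⟩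
  | tail _ hbc ih =>
      obtain ⟨w, hw1, hw2⟩ := ih
      obtain ⟨w', hw1', hw2'⟩ := par_strip hbc hw1
      exact ⟨w', hw1', hw2.tail hw2'⟩

theorem star_iff_parstar {t u : Lam} : BetaStar t u ↔ Relation.ReflTransGen Par t u := by
  constructor
  · intro h; induction h with
    | refl => exact Relation.ReflTransGen.refl
    | tail _ h2 ih => exact ih.tail (beta_par h2)
  · intro h; induction h with
    | refl => exact Relation.ReflTransGen.refl
    | tail _ h2 ih => exact Relation.ReflTransGen.trans ih (par_star h2)

theorem beta_confluence {t u v : Lam} (h1 : BetaStar t u) (h2 : BetaStar t v) :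
    ∃ w, BetaStar u w ∧ BetaStar v w := by
  obtain ⟨w, hw1, hw2⟩ := par_confl (star_iff_parstar.1 h1) (star_iff_parstar.1 h2)
  exact ⟨w, star_iff_parstar.2 hw1, star_iff_parstar.2 hw2⟩

theorem church_rosser {M N : Lam} (h : Conv M N) : ∃ L, BetaStar M L ∧ BetaStar N L := by
  induction h with
  | rel h => exact ⟨_, Relation.ReflTransGen.single h, Relation.ReflTransGen.refl⟩
  | refl s => exact ⟨s, Relation.ReflTransGen.refl, Relation.ReflTransGen.refl⟩
  | symm _ ih => obtain ⟨L, h1, h2⟩ := ih; exact ⟨L, h2, h1⟩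
  | trans _ _ ih1 ih2 =>
      obtain ⟨L1, h1, h2⟩ := ih1
      obtain ⟨L2, h3, h4⟩ := ih2
      obtain ⟨L, h5, h6⟩ := beta_confluence h2 h3
      exact ⟨L, Relation.ReflTransGen.trans h1 h5, Relation.ReflTransGen.trans h4 h6⟩

end P3

section P4

/-! ### appList / mkHnf basics -/

theorem appList_cons (M a : Lam) (L : List Lam) : appList M (a :: L) = appList (app M a) L := rfl

theorem appList_append_one (M a : Lam) (L : List Lam) :
    appList M (L ++ [a]) = app (appList M L) a := by
  simp [appList]

theorem appList_var_not_abs (y : ℕ) (args : List Lam) : ¬ IsAbs (appList (var y) args) := by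
  induction args using List.reverseRecOn with
  | nil => intro h; exact h
  | append_singleton L a ih => rw [appList_append_one]; intro h; exact h

theorem appList_var_no_headstep (y : ℕ) (args : List Lam) :
    ∀ X, ¬ HeadStep (appList (var y) args) X := by
  induction args using List.reverseRecOn with
  | nil => intro X h; cases h
  | append_singleton L a ih =>
      intro X h
      rw [appList_append_one] at h
      generalize hs : appList (var y) L = LS at h
      cases h with
      | beta B C => exact appList_var_not_abs y L (by rw [hs]; trivial)
      | app _ hna h' => rw [← hs] at h'; exact ih _ h'

theorem mkHnf_zero (y : ℕ) (args : List Lam) : mkHnf 0 y args = appList (var y) args := rfl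

theorem mkHnf_succ (n y : ℕ) (args : List Lam) :
    mkHnf (n+1) y args = abs (mkHnf n y args) := rfl

theorem mkHnf_no_headstep (n y : ℕ) (args : List Lam) :
    ∀ X, ¬ HeadStep (mkHnf n y args) X := by
  induction n with
  | zero => exact appList_var_no_headstep y args
  | succ n ih =>
      intro X h
      rw [mkHnf_succ] at h
      cases h with
      | abs h' => exact ih _ h'

theorem hnf_no_headstep {H X : Lam} (h : IsHnf H) : ¬ HeadStep H X := by
  obtain ⟨n, y, args, rfl⟩ := h; exact mkHnf_no_headstep n y args X

/-! ### HeadStep determinism and shapes -/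

theorem headstep_det {M A B : Lam} (h1 : HeadStep M A) (h2 : HeadStep M B) : A = B := by
  induction h1 generalizing B with
  | beta t u =>
      cases h2 with
      | beta => rfl
      | app _ hna _ => exact absurd trivial hna
  | app t hna _ ih =>
      cases h2 with
      | beta => exact absurd trivial hna
      | app _ _ h' => rw [ih h']
  | abs _ ih =>
      cases h2 with
      | abs h' => rw [ih h']

theorem abs_persist_step {u v : Lam} (h : HeadStep u v) (ha : IsAbs u) : IsAbs v := by
  cases h with
  | beta => exact ha.elim
  | app => exact ha.elim
  | abs => trivial

theorem headsteps_trans {j k : ℕ} {M N P : Lam} (h1 : HeadSteps j M N) (h2 : HeadSteps k N P) :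
    HeadSteps (j + k) M P := by
  induction j generalizing M with
  | zero => cases h1; simpa using h2
  | succ j ih =>
      obtain ⟨u, hu, h1'⟩ := h1
      have he : j + 1 + k = (j + k) + 1 := by omega
      rw [he]
      exact ⟨u, hu, ih h1'⟩

theorem headsteps_abs {k : ℕ} {M N : Lam} (h : HeadSteps k M N) :
    HeadSteps k (abs M) (abs N) := by
  induction k generalizing M with
  | zero => cases h; rfl
  | succ k ih => obtain ⟨u, hu, h'⟩ := h; exact ⟨abs u, HeadStep.abs hu, ih h'⟩

theorem abs_persist {k : ℕ} {u v : Lam} (h : HeadSteps k u v) (ha : IsAbs u) : IsAbs v := by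
  induction k generalizing u with
  | zero => cases h; exact ha
  | succ k ih => obtain ⟨w, hw, h'⟩ := h; exact ih h' (abs_persist_step hw ha)

theorem headsteps_appL {j : ℕ} {s s₁ : Lam} (t : Lam) (h : HeadSteps j s s₁)
    (hna : ¬ IsAbs s₁) : HeadSteps j (app s t) (app s₁ t) := by
  induction j generalizing s with
  | zero => cases h; rfl
  | succ j ih =>
      obtain ⟨u, hu, h'⟩ := h
      have hns : ¬ IsAbs s := fun habs =>
        hna (abs_persist (k := j+1) (show HeadSteps (j+1) s s₁ from ⟨u, hu, h'⟩) habs)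
      exact ⟨app u t, HeadStep.app t hns hu, ih h'⟩

theorem headstep_src {M A : Lam} (h : HeadStep M A) :
    (∃ a b, M = app a b) ∨ (∃ a, M = abs a) := by
  cases h with
  | beta t u => exact Or.inl ⟨_, _, rfl⟩
  | app => exact Or.inl ⟨_, _, rfl⟩
  | abs => exact Or.inr ⟨_, rfl⟩

theorem headstep_subst {t t' : Lam} (h : HeadStep t t') (k : ℕ) (u : Lam) :
    HeadStep (subst t k u) (subst t' k u) := by
  induction h generalizing k u with
  | beta B C =>
      simp only [Lam.subst]
      rw [subst_subst0]
      exact HeadStep.beta _ _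
  | app t hna hs ih =>
      rename_i s s'
      rcases headstep_src hs with ⟨a, b, rfl⟩ | ⟨a, rfl⟩
      · exact HeadStep.app _ (fun hh => hh) (ih k u)
      · exact absurd trivial hna
  | abs _ ih => exact HeadStep.abs (ih (k+1) (lift 0 u))

/-! ### head totality -/

theorem head_total : ∀ M : Lam, IsHnf M ∨ ∃ M', HeadStep M M' := by
  intro M
  induction M with
  | var n => exact Or.inl ⟨0, n, [], rfl⟩
  | abs t iht =>
      rcases iht with ⟨n, y, args, rfl⟩ | ⟨t', ht⟩
      · exact Or.inl ⟨n+1, y, args, rfl⟩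
      · exact Or.inr ⟨abs t', HeadStep.abs ht⟩
  | app s t ihs iht =>
      cases s with
      | abs s0 => exact Or.inr ⟨subst s0 0 t, HeadStep.beta s0 t⟩
      | var n => exact Or.inl ⟨0, n, [t], rfl⟩
      | app a b =>
          rcases ihs with ⟨n, y, args, h⟩ | ⟨s', hs⟩
          · cases n with
            | zero =>
                refine Or.inl ⟨0, y, args ++ [t], ?_⟩
                rw [h]; simp [mkHnf, absN, appList_append_one]
            | succ n => rw [mkHnf_succ] at h; cases h
          · exact Or.inr ⟨app s' t, HeadStep.app t (fun hh => hh) hs⟩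

/-! ### mkHnf injectivity -/

theorem appList_var_inj : ∀ (args args' : List Lam) (y y' : ℕ),
    appList (var y) args = appList (var y') args' → y = y' ∧ args = args' := by
  intro args
  induction args using List.reverseRecOn with
  | nil =>
      intro args' y y' h
      induction args' using List.reverseRecOn with
      | nil => simp [appList] at h; exact ⟨h, rfl⟩
      | append_singleton L a ih => rw [appList_append_one] at h; cases h
  | append_singleton L a ih =>
      intro args' y y' h
      induction args' using List.reverseRecOn with
      | nil => rw [appList_append_one] at h; cases h
      | append_singleton L' a' ih' =>
          rw [appList_append_one, appList_append_one] at h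
          injection h with h1 h2
          obtain ⟨hy, hL⟩ := ih L' y y' h1
          exact ⟨hy, by rw [hL, h2]⟩

theorem mkHnf_inj : ∀ (n n' y y' : ℕ) (args args' : List Lam),
    mkHnf n y args = mkHnf n' y' args' → n = n' ∧ y = y' ∧ args = args' := by
  intro n
  induction n with
  | zero =>
      intro n' y y' args args' h
      cases n' with
      | zero =>
          obtain ⟨hy, ha⟩ := appList_var_inj args args' y y' h
          exact ⟨rfl, hy, ha⟩
      | succ n' =>
          rw [mkHnf_zero, mkHnf_succ] at h
          exact absurd (h ▸ trivial) (appList_var_not_abs y args)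
  | succ n ih =>
      intro n' y y' args args' h
      cases n' with
      | zero =>
          rw [mkHnf_zero, mkHnf_succ] at h
          exact absurd (h ▸ trivial) (appList_var_not_abs y' args')
      | succ n' =>
          rw [mkHnf_succ, mkHnf_succ] at h
          injection h with h'
          obtain ⟨h1, h2, h3⟩ := ih n' y y' args args' h'
          exact ⟨by omega, h2, h3⟩

/-! ### HeadSteps uniqueness -/

theorem headsteps_unique : ∀ (k k' : ℕ) (M H H' : Lam), HeadSteps k M H → HeadSteps k' M H' →
    IsHnf H → IsHnf H' → k = k' ∧ H = H' := by
  intro k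
  induction k with
  | zero =>
      intro k' M H H' h1 h2 hH hH'
      cases h1
      cases k' with
      | zero => cases h2; exact ⟨rfl, rfl⟩
      | succ k' => obtain ⟨u, hu, -⟩ := h2; exact absurd hu (hnf_no_headstep hH)
  | succ k ih =>
      intro k' M H H' h1 h2 hH hH'
      obtain ⟨u, hu, h1'⟩ := h1
      cases k' with
      | zero => cases h2; exact absurd hu (hnf_no_headstep hH')
      | succ k' =>
          obtain ⟨u', hu', h2'⟩ := h2
          obtain rfl := headstep_det hu hu'
          obtain ⟨h3, h4⟩ := ih k' u H H' h1' h2' hH hH'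
          exact ⟨by omega, h4⟩

/-! ### simple head steps -/

theorem shs_head {M A : Lam} (h : SimpleHeadStep M A) : HeadStep M A := by
  induction h with
  | beta t u _ => exact HeadStep.beta t u
  | app t hna _ ih => exact HeadStep.app t hna ih
  | abs _ ih => exact HeadStep.abs ih

def SimpleSeq : ℕ → Lam → Lam → Prop
  | 0, s, t => s = t
  | k + 1, s, t => ∃ u, SimpleHeadStep s u ∧ SimpleSeq k u t

theorem simpleseq_headsteps {k : ℕ} {M H : Lam} (h : SimpleSeq k M H) : HeadSteps k M H := by
  induction k generalizing M with
  | zero => exact h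
  | succ k ih => obtain ⟨u, hu, h'⟩ := h; exact ⟨u, shs_head hu, ih h'⟩

theorem rtg_simpleseq {M H : Lam} (h : Relation.ReflTransGen SimpleHeadStep M H) :
    ∃ k, SimpleSeq k M H := by
  induction h with
  | refl => exact ⟨0, rfl⟩
  | tail _ h2 ih =>
      obtain ⟨k, hk⟩ := ih
      clear * - hk h2
      induction k generalizing M with
      | zero => cases hk; exact ⟨1, _, h2, rfl⟩
      | succ k ih =>
          obtain ⟨u, hu, hk'⟩ := hk
          obtain ⟨k', hk''⟩ := ih hk'
          exact ⟨k' + 1, u, hu, hk''⟩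

theorem simpleseq_suffix : ∀ (j k : ℕ) (P H N : Lam), SimpleSeq k P H → IsHnf H →
    HeadSteps j P N → j ≤ k ∧ SimpleSeq (k - j) N H := by
  intro j
  induction j with
  | zero => intro k P H N h1 h2 h3; cases h3; simpa using h1
  | succ j ih =>
      intro k P H N h1 h2 h3
      obtain ⟨u, hu, h3'⟩ := h3
      cases k with
      | zero =>
          cases h1
          exact absurd hu (hnf_no_headstep h2)
      | succ k =>
          obtain ⟨u', hu', h1'⟩ := h1
          cases headstep_det hu (shs_head hu')
          obtain ⟨hj, hs⟩ := ih k u H N h1' h2 h3'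
          exact ⟨by omega, by simpa [Nat.succ_sub_succ] using hs⟩

/-! ### SimpleTerm plumbing -/

theorem simple_dest {M : Lam} (h : SimpleTerm M) :
    ¬ HasHnf M ∨ ∃ k n y args, SimpleSeq k M (mkHnf n y args) ∧ ∀ A ∈ args, SimpleTerm A := by
  obtain ⟨X, hXM, hX⟩ := h
  rcases hX M hXM with h1 | ⟨n, y, args, h2, h3⟩
  · exact Or.inl h1
  · obtain ⟨k, hk⟩ := rtg_simpleseq h2
    exact Or.inr ⟨k, n, y, args, hk, fun A hA => ⟨X, h3 A hA, hX⟩⟩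

theorem simple_head_reduct {M M₁ : Lam} (h : SimpleTerm M) (hstep : HeadStep M M₁) :
    SimpleTerm M₁ := by
  obtain ⟨X, hXM, hX⟩ := h
  refine ⟨fun N => X N ∨ ∃ P j, X P ∧ HeadSteps j P N, Or.inr ⟨M, 1, hXM, M₁, hstep, rfl⟩, ?_⟩
  rintro N (hN | ⟨P, j, hP, hPN⟩)
  · rcases hX N hN with h1 | ⟨n, y, args, h2, h3⟩
    · exact Or.inl h1
    · exact Or.inr ⟨n, y, args, h2, fun A hA => Or.inl (h3 A hA)⟩
  · rcases hX P hP with h1 | ⟨n, y, args, h2, h3⟩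
    · refine Or.inl ?_
      intro ⟨kk, H, hH, hH2⟩
      exact h1 ⟨j + kk, H, headsteps_trans hPN hH, hH2⟩
    · obtain ⟨k, hk⟩ := rtg_simpleseq h2
      obtain ⟨hj, hsuf⟩ := simpleseq_suffix j k P _ N hk ⟨n, y, args, rfl⟩ hPN
      refine Or.inr ⟨n, y, args, ?_, fun A hA => Or.inl (h3 A hA)⟩
      clear * - hsuf
      generalize hkk : k - j = kk at hsuf
      clear hkk
      induction kk generalizing N with
      | zero => cases hsuf; exact Relation.ReflTransGen.refl
      | succ kk ih =>
          obtain ⟨u, hu, h'⟩ := hsuf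
          exact Relation.ReflTransGen.head hu (ih u h')

end P4

section P5

/-! ### Kashima standardization with counted head-application steps -/

inductive Hap : Lam → Lam → Prop
  | beta (t u : Lam) : Hap (app (abs t) u) (subst t 0 u)
  | app {s s' : Lam} (t : Lam) : Hap s s' → Hap (app s t) (app s' t)

def HapN : ℕ → Lam → Lam → Prop
  | 0, s, t => s = t
  | k + 1, s, t => ∃ u, Hap s u ∧ HapN k u t

inductive StT : ℕ → Lam → Lam → Prop
  | var {a : ℕ} {M : Lam} {x : ℕ} : HapN a M (var x) → StT a M (var x)
  | app {a b c : ℕ} {M s t s' t' : Lam} :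
      HapN a M (app s t) → StT b s s' → StT c t t' → StT (a+b+c) M (app s' t')
  | abs {a b : ℕ} {M t t' : Lam} : HapN a M (abs t) → StT b t t' → StT (a+b) M (abs t')

theorem hap_src_app {s s' : Lam} (h : Hap s s') : ∃ a b, s = app a b := by
  cases h <;> exact ⟨_, _, rfl⟩

theorem hap_headstep {s s' : Lam} (h : Hap s s') : HeadStep s s' := by
  induction h with
  | beta t u => exact HeadStep.beta t u
  | app t h ih =>
      obtain ⟨a, b, rfl⟩ := hap_src_app h
      exact HeadStep.app t (fun hh => hh) ih

theorem hap_beta {s s' : Lam} (h : Hap s s') : Beta s s' := by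
  induction h with
  | beta t u => exact Beta.beta t u
  | app t _ ih => exact Beta.appL t ih

theorem headstep_beta {s s' : Lam} (h : HeadStep s s') : Beta s s' := by
  induction h with
  | beta t u => exact Beta.beta t u
  | app t _ _ ih => exact Beta.appL t ih
  | abs _ ih => exact Beta.abs ih

theorem hapn_trans {a b : ℕ} {M N P : Lam} (h1 : HapN a M N) (h2 : HapN b N P) :
    HapN (a + b) M P := by
  induction a generalizing M with
  | zero => cases h1; simpa using h2
  | succ a ih =>
      obtain ⟨u, hu, h1'⟩ := h1
      have he : a + 1 + b = (a + b) + 1 := by omega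
      rw [he]
      exact ⟨u, hu, ih h1'⟩

theorem hapn_headsteps {a : ℕ} {M N : Lam} (h : HapN a M N) : HeadSteps a M N := by
  induction a generalizing M with
  | zero => exact h
  | succ a ih => obtain ⟨u, hu, h'⟩ := h; exact ⟨u, hap_headstep hu, ih h'⟩

theorem hapn_star {a : ℕ} {M N : Lam} (h : HapN a M N) : BetaStar M N := by
  induction a generalizing M with
  | zero => cases h; exact Relation.ReflTransGen.refl
  | succ a ih => obtain ⟨u, hu, h'⟩ := h; exact Relation.ReflTransGen.head (hap_beta hu) (ih h')

theorem hapn_appL {a : ℕ} {s s' : Lam} (t : Lam) (h : HapN a s s') :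
    HapN a (app s t) (app s' t) := by
  induction a generalizing s with
  | zero => cases h; rfl
  | succ a ih => obtain ⟨u, hu, h'⟩ := h; exact ⟨app u t, Hap.app t hu, ih h'⟩

theorem stt_prepend {a b : ℕ} {M N L : Lam} (h1 : HapN a M N) (h2 : StT b N L) :
    StT (a + b) M L := by
  cases h2 with
  | var h => exact StT.var (hapn_trans h1 h)
  | app h hb hc =>
      rw [show ∀ x y z : ℕ, a + (x + y + z) = (a + x) + y + z by intros; omega]
      exact StT.app (hapn_trans h1 h) hb hc
  | abs h hb =>
      rw [show ∀ x y : ℕ, a + (x + y) = (a + x) + y by intros; omega]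
      exact StT.abs (hapn_trans h1 h) hb

theorem stt_refl : ∀ M : Lam, StT 0 M M := by
  intro M
  induction M with
  | var n => exact StT.var rfl
  | app s t ihs iht => exact StT.app (a := 0) (b := 0) (c := 0) rfl ihs iht
  | abs t iht => exact StT.abs (a := 0) (b := 0) rfl iht

theorem hap_lift {t t' : Lam} (h : Hap t t') (d : ℕ) : Hap (lift d t) (lift d t') := by
  induction h generalizing d with
  | beta B C =>
      simp only [Lam.lift]
      rw [lift_subst_hi B d 0 C (by omega)]
      exact Hap.beta _ _
  | app t _ ih => exact Hap.app _ (ih d)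

theorem hapn_lift {a : ℕ} {t t' : Lam} (h : HapN a t t') (d : ℕ) :
    HapN a (lift d t) (lift d t') := by
  induction a generalizing t with
  | zero => cases h; rfl
  | succ a ih => obtain ⟨u, hu, h'⟩ := h; exact ⟨lift d u, hap_lift hu d, ih h'⟩

theorem stt_lift {T : ℕ} {t t' : Lam} (h : StT T t t') : ∀ d, StT T (lift d t) (lift d t') := by
  induction h with
  | var h =>
      intro d
      have h2 := hapn_lift h d
      simp only [Lam.lift] at h2 ⊢
      split_ifs at h2 ⊢ <;> exact StT.var h2
  | app h _ _ ihb ihc => intro d; exact StT.app (hapn_lift h d) (ihb d) (ihc d)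
  | abs h _ ihb => intro d; exact StT.abs (hapn_lift h d) (ihb (d+1))

theorem hap_subst {t t' : Lam} (h : Hap t t') (k : ℕ) (u : Lam) :
    Hap (subst t k u) (subst t' k u) := by
  induction h generalizing k u with
  | beta B C =>
      simp only [Lam.subst]
      rw [subst_subst0]
      exact Hap.beta _ _
  | app t _ ih => exact Hap.app _ (ih k u)

theorem hapn_subst {a : ℕ} {t t' : Lam} (h : HapN a t t') (k : ℕ) (u : Lam) :
    HapN a (subst t k u) (subst t' k u) := by
  induction a generalizing t with
  | zero => cases h; rfl
  | succ a ih => obtain ⟨w, hw, h'⟩ := h; exact ⟨subst w k u, hap_subst hw k u, ih h'⟩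

theorem stt_subst {T : ℕ} {A A' : Lam} (h : StT T A A') :
    ∀ (k : ℕ) {c : ℕ} {u u' : Lam}, StT c u u' → ∃ d, StT d (subst A k u) (subst A' k u') := by
  induction h with
  | @var a M x h =>
      intro k c u u' hu
      have hσ := hapn_subst h k u
      rcases lt_trichotomy x k with hx | hx | hx
      · rw [show subst (var x) k u = var x by simp [Lam.subst, hx]] at hσ
        refine ⟨a, ?_⟩
        rw [show subst (var x) k u' = var x by simp [Lam.subst, hx]]
        exact StT.var hσ
      · subst hx
        rw [show subst (var x) x u = u by simp [Lam.subst]] at hσ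
        rw [show subst (var x) x u' = u' by simp [Lam.subst]]
        exact ⟨a + c, stt_prepend hσ hu⟩
      · have e1 : subst (var x) k u = var (x-1) := by
          simp only [Lam.subst]; rw [if_neg (by omega), if_neg (by omega)]
        have e2 : subst (var x) k u' = var (x-1) := by
          simp only [Lam.subst]; rw [if_neg (by omega), if_neg (by omega)]
        rw [e1] at hσ
        refine ⟨a, ?_⟩
        rw [e2]
        exact StT.var hσ
  | @app a b c M s t s' t' h hs ht ihs iht =>
      intro k c' u u' hu
      obtain ⟨ds, hds⟩ := ihs k hu
      obtain ⟨dt, hdt⟩ := iht k hu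
      have hσ := hapn_subst h k u
      simp only [Lam.subst] at hσ
      exact ⟨a + ds + dt, StT.app hσ hds hdt⟩
  | @abs a b M t t' h ht iht =>
      intro k c u u' hu
      obtain ⟨dt, hdt⟩ := iht (k+1) (stt_lift hu 0)
      have hσ := hapn_subst h k u
      simp only [Lam.subst] at hσ
      exact ⟨a + dt, StT.abs hσ hdt⟩

theorem stt_abs_inv {b : ℕ} {s A' : Lam} (h : StT b s (abs A')) :
    ∃ a₂ b₂ A0, HapN a₂ s (abs A0) ∧ StT b₂ A0 A' ∧ a₂ + b₂ = b := by
  cases h with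
  | abs h hb => exact ⟨_, _, _, h, hb, rfl⟩

theorem stt_beta_right {T : ℕ} {M N : Lam} (h : StT T M N) :
    ∀ {N' : Lam}, Beta N N' → ∃ T', StT T' M N' := by
  induction h with
  | var h => intro N' hN; cases hN
  | @app a b c M s t s' t' h hs ht ihs iht =>
      intro N' hN
      cases hN with
      | beta B C =>
          obtain ⟨a₂, b₂, A0, hhap, hst, -⟩ := stt_abs_inv hs
          have h1 : HapN (a₂ + 1) (app s t) (subst A0 0 t) := by
            have := hapn_appL t hhap
            have h2 : HapN 1 (app (abs A0) t) (subst A0 0 t) := ⟨_, Hap.beta _ _, rfl⟩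
            exact hapn_trans this h2
          obtain ⟨d, hd⟩ := stt_subst hst 0 ht
          exact ⟨a + (a₂ + 1) + d, stt_prepend (hapn_trans h h1) hd⟩
      | appL _ hstep =>
          obtain ⟨T', hT'⟩ := ihs hstep
          exact ⟨a + T' + c, StT.app h hT' ht⟩
      | appR _ hstep =>
          obtain ⟨T', hT'⟩ := iht hstep
          exact ⟨a + b + T', StT.app h hs hT'⟩
  | @abs a b M t t' h ht iht =>
      intro N' hN
      cases hN with
      | abs hstep =>
          obtain ⟨T', hT'⟩ := iht hstep
          exact ⟨a + T', StT.abs h hT'⟩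

theorem star_stt {M N : Lam} (h : BetaStar M N) : ∃ T, StT T M N := by
  induction h with
  | refl => exact ⟨0, stt_refl M⟩
  | tail _ h2 ih => obtain ⟨T, hT⟩ := ih; exact stt_beta_right hT h2

/-! ### head normalization is reflected -/

theorem appList_eq_var {args : List Lam} {y x : ℕ} (h : appList (var y) args = var x) :
    args = [] ∧ y = x := by
  induction args using List.reverseRecOn with
  | nil => simp [appList] at h; exact ⟨rfl, h⟩
  | append_singleton L a ih => rw [appList_append_one] at h; cases h

theorem appList_eq_app {args : List Lam} {y : ℕ} {A B : Lam}
    (h : appList (var y) args = app A B) : ∃ L, args = L ++ [B] ∧ A = appList (var y) L := by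
  induction args using List.reverseRecOn with
  | nil => simp [appList] at h
  | append_singleton L a ih =>
      rw [appList_append_one] at h
      injection h with h1 h2
      exact ⟨L, by rw [h2], h1.symm⟩

theorem appList_ne_abs {args : List Lam} {y : ℕ} {A : Lam} :
    appList (var y) args ≠ abs A := by
  intro h
  have := appList_var_not_abs y args
  rw [h] at this
  exact this trivial

theorem stt_neutral {T : ℕ} {M X : Lam} (h : StT T M X) :
    ∀ {y : ℕ} {args' : List Lam}, X = appList (var y) args' →
    ∃ j args, HeadSteps j M (appList (var y) args) := by
  induction h with
  | @var a M x h =>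
      intro y args' hX
      obtain ⟨rfl, rfl⟩ := appList_eq_var hX.symm
      exact ⟨a, [], hapn_headsteps h⟩
  | @app a b c M s t s' t' h hs ht ihs iht =>
      intro y args' hX
      obtain ⟨L, rfl, hA⟩ := appList_eq_app hX.symm
      obtain ⟨j, args₀, hj⟩ := ihs hA
      have hna : ¬ IsAbs (appList (var y) args₀) := appList_var_not_abs y args₀
      have h1 : HeadSteps j (app s t) (app (appList (var y) args₀) t) :=
        headsteps_appL t hj hna
      refine ⟨a + j, args₀ ++ [t], ?_⟩
      have := headsteps_trans (hapn_headsteps h) h1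
      rwa [appList_append_one]
  | @abs a b M t t' h ht iht =>
      intro y args' hX
      exact absurd hX.symm appList_ne_abs

theorem hashnf_abs {t : Lam} (h : HasHnf t) : HasHnf (abs t) := by
  obtain ⟨k, H, hk, n, y, args, rfl⟩ := h
  exact ⟨k, abs (mkHnf n y args), headsteps_abs hk, n+1, y, args, rfl⟩

theorem hashnf_headsteps_pre {j : ℕ} {M N : Lam} (h : HeadSteps j M N) (h2 : HasHnf N) :
    HasHnf M := by
  obtain ⟨k, H, hk, hH⟩ := h2
  exact ⟨j + k, H, headsteps_trans h hk, hH⟩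

theorem stt_hnf {n : ℕ} : ∀ {T : ℕ} {M : Lam} {y : ℕ} {args' : List Lam},
    StT T M (mkHnf n y args') → HasHnf M := by
  induction n with
  | zero =>
      intro T M y args' h
      obtain ⟨j, args, hj⟩ := stt_neutral h rfl
      exact ⟨j, _, hj, 0, y, args, rfl⟩
  | succ n ih =>
      intro T M y args' h
      rw [mkHnf_succ] at h
      obtain ⟨a₂, b₂, A0, hhap, hst, -⟩ := stt_abs_inv h
      have : HasHnf A0 := ih hst
      exact hashnf_headsteps_pre (hapn_headsteps hhap) (hashnf_abs this)

theorem hnf_reflect {M N : Lam} (h : BetaStar M N) (h2 : HasHnf N) : HasHnf M := by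
  obtain ⟨k, H, hk, n, y, args, rfl⟩ := h2
  have hMH : BetaStar M (mkHnf n y args) := by
    refine Relation.ReflTransGen.trans h ?_
    clear * - hk
    induction k generalizing N with
    | zero => cases hk; exact Relation.ReflTransGen.refl
    | succ k ih =>
        obtain ⟨u, hu, h'⟩ := hk
        exact Relation.ReflTransGen.head (headstep_beta hu) (ih h')
  obtain ⟨T, hT⟩ := star_stt hMH
  exact stt_hnf hT

end P5

section P6

/-! ### more occ lemmas -/

theorem occ_subst_ge (t : Lam) : ∀ j u x, j ≤ x →
    occ x (subst t j u) = occ (x+1) t + occ j t * occ x u := by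
  induction t with
  | var n => intro j u x h; simp only [Lam.subst, occ]; split_ifs <;> (try simp only [occ]) <;>
      (try split_ifs) <;> omega
  | app s t ihs iht => intro j u x h; simp only [Lam.subst, occ, ihs _ _ _ h, iht _ _ _ h]; ring
  | abs t iht =>
      intro j u x h
      simp only [Lam.subst, occ, iht (j+1) (lift 0 u) (x+1) (by omega),
        occ_lift_ge u 0 x (by omega)]

theorem occ_zero_subst_irrel {t : Lam} : ∀ (k : ℕ) (u u' : Lam), occ k t = 0 →
    subst t k u = subst t k u' := by
  induction t with
  | var n => intro k u u' h; simp only [occ] at h; simp only [Lam.subst]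
             split_ifs with h1 h2 <;> first | rfl | (exfalso; rw [if_pos h2] at h; omega)
  | app s t ihs iht =>
      intro k u u' h
      simp only [occ] at h
      simp only [Lam.subst]
      rw [ihs k u u' (by omega), iht k u u' (by omega)]
  | abs t iht =>
      intro k u u' h
      simp only [occ] at h
      simp only [Lam.subst]
      rw [iht (k+1) (lift 0 u) (lift 0 u') h]

theorem occ_zero_hap {P W : Lam} (h : Hap P W) : ∀ k, occ k P = 0 → occ k W = 0 := by
  induction h with
  | beta B C =>
      intro k h0
      simp only [occ] at h0
      rw [occ_subst_ge B 0 C k (by omega)]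
      have h1 : occ k C = 0 := by omega
      rw [h1, Nat.mul_zero]
      omega
  | app t _ ih =>
      intro k h0
      simp only [occ] at h0 ⊢
      rw [ih k (by omega)]
      omega

theorem occ0_subst_body (B : Lam) (k : ℕ) (Q : Lam) :
    occ 0 (subst B (k+1) (lift 0 Q)) = occ 0 B := by
  rw [occ_subst_lt B (k+1) (lift 0 Q) 0 (by omega), occ_lift_self]
  ring

theorem nf_star {t t' : Lam} (h : IsNormalForm t) (hs : BetaStar t t') : t' = t := by
  induction hs using Relation.ReflTransGen.head_induction_on with
  | refl => rfl
  | head h1 _ _ => exact absurd h1 (h _)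

/-! ### simple step transfer -/

theorem simple_src_shape {M A : Lam} (h : SimpleHeadStep M A) :
    (∃ a b, M = app a b) ∨ (∃ a, M = abs a) := by
  cases h with
  | beta t u _ => exact Or.inl ⟨_, _, rfl⟩
  | app => exact Or.inl ⟨_, _, rfl⟩
  | abs => exact Or.inr ⟨_, rfl⟩

theorem simple_pullback {P P₁ : Lam} (h : HeadStep P P₁) :
    ∀ (k : ℕ) (Q : Lam), SimpleHeadStep (subst P k Q) (subst P₁ k Q) → SimpleHeadStep P P₁ := by
  induction h with
  | beta B C =>
      intro k Q hs
      simp only [Lam.subst] at hs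
      rw [subst_subst0] at hs
      generalize hB : subst B (k+1) (lift 0 Q) = BB at hs
      generalize hT : subst BB 0 (subst C k Q) = TT at hs
      cases hs with
      | beta _ _ hcond =>
          refine SimpleHeadStep.beta B C ?_
          rcases hcond with h1 | h1
          · left; rw [← hB, occ0_subst_body] at h1; exact h1
          · right; exact nf_subst_back k Q h1
      | app _ hna _ => exact absurd trivial hna
  | @app s s' t hna hstep ih =>
      intro k Q hs
      obtain ⟨a, b, rfl⟩ | ⟨a, rfl⟩ := headstep_src hstep
      · simp only [Lam.subst] at hs
        cases hs with
        | app _ hna' h' =>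
            exact SimpleHeadStep.app t (fun hh => hh) (ih k Q h')
      · exact absurd trivial hna
  | @abs t t' hstep ih =>
      intro k Q hs
      simp only [Lam.subst] at hs
      cases hs with
      | abs h' => exact SimpleHeadStep.abs (ih (k+1) (lift 0 Q) h')

theorem hap_occ {P W : Lam} (h : Hap P W) : ∀ (k : ℕ) (Q : Lam),
    SimpleHeadStep (subst P k Q) (subst W k Q) → occ k P ≤ 1 →
    occ k W ≤ 1 ∨ IsNormalForm Q := by
  induction h with
  | beta B C =>
      intro k Q hs hocc
      simp only [occ] at hocc
      simp only [Lam.subst] at hs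
      rw [subst_subst0] at hs
      generalize hB : subst B (k+1) (lift 0 Q) = BB at hs
      generalize hT : subst BB 0 (subst C k Q) = TT at hs
      have hW : occ k (subst B 0 C) = occ (k+1) B + occ 0 B * occ k C :=
        occ_subst_ge B 0 C k (by omega)
      cases hs with
      | beta _ _ hcond =>
          rcases hcond with h1 | h1
          · rw [← hB, occ0_subst_body] at h1
            left
            rw [hW]
            have h3 : occ 0 B * occ k C ≤ occ k C := by
              calc occ 0 B * occ k C ≤ 1 * occ k C := Nat.mul_le_mul_right _ h1
              _ = occ k C := Nat.one_mul _
            omega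
          · rcases Nat.eq_zero_or_pos (occ k C) with h2 | h2
            · left; rw [hW, h2]; omega
            · right; exact nf_subst_pull k Q h2 h1
      | app _ hna _ => exact absurd trivial hna
  | @app P₁ W₁ t hstep ih =>
      intro k Q hs hocc
      simp only [occ] at hocc ⊢
      obtain ⟨a, b, rfl⟩ := hap_src_app hstep
      simp only [Lam.subst] at hs
      cases hs with
      | app _ hna' h' =>
          rcases Nat.eq_zero_or_pos (occ k t) with h2 | h2
          · rcases ih k Q h' (by omega) with h3 | h3
            · left; omega
            · right; exact h3
          · have h4 : occ k (app a b) = 0 := by simp only [occ] at hocc ⊢; omega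
            have h5 := occ_zero_hap hstep k h4
            left; omega

/-! ### the budgeted simulation relation -/

inductive ERel : ℕ → Lam → Lam → Prop
  | var (x : ℕ) : ERel 0 (var x) (var x)
  | app {b c : ℕ} {s t s' t' : Lam} :
      ERel b s s' → ERel c t t' → ERel (b+c) (app s t) (app s' t')
  | abs {b : ℕ} {t t' : Lam} : ERel b t t' → ERel b (abs t) (abs t')
  | hap {b : ℕ} {M N L : Lam} : Hap M N → ERel b N L → ERel (b+1) M L
  | sub {b c k : ℕ} {P P' Q Q' : Lam} : ERel b P P' → ERel c Q Q' →
      (occ k P ≤ 1 ∨ IsNormalForm Q) → ERel (b+c) (subst P k Q) (subst P' k Q')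

theorem erel_refl : ∀ M : Lam, ERel 0 M M := by
  intro M
  induction M with
  | var n => exact ERel.var n
  | app s t ihs iht => exact ERel.app (b := 0) (c := 0) ihs iht
  | abs t iht => exact ERel.abs iht

theorem erel_star {T : ℕ} {M L : Lam} (h : ERel T M L) : BetaStar M L := by
  induction h with
  | var x => exact Relation.ReflTransGen.refl
  | app _ _ ihs iht => exact Relation.ReflTransGen.trans (star_appL _ ihs) (star_appR _ iht)
  | abs _ iht => exact star_abs iht
  | hap h _ ih => exact Relation.ReflTransGen.head (hap_beta h) ih
  | sub _ _ _ ihP ihQ => exact star_subst _ ihP ihQ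

theorem hapn_erel {a b : ℕ} {M N L : Lam} (h1 : HapN a M N) (h2 : ERel b N L) :
    ERel (a + b) M L := by
  induction a generalizing M with
  | zero => cases h1; simpa using h2
  | succ a ih =>
      obtain ⟨u, hu, h1'⟩ := h1
      have he : a + 1 + b = (a + b) + 1 := by omega
      rw [he]
      exact ERel.hap hu (ih h1')

theorem stt_erel {T : ℕ} {M L : Lam} (h : StT T M L) : ERel T M L := by
  induction h with
  | @var a M x h => simpa using hapn_erel h (ERel.var x)
  | @app a b c M s t s' t' h _ _ ihs iht =>
      have := hapn_erel h (ERel.app ihs iht)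
      rwa [← Nat.add_assoc] at this
  | @abs a b M t t' h _ iht => exact hapn_erel h (ERel.abs iht)

theorem erel_lift {T : ℕ} {t t' : Lam} (h : ERel T t t') : ∀ d, ERel T (lift d t) (lift d t') := by
  induction h with
  | var x => intro d; exact erel_refl _
  | app _ _ ihs iht => intro d; exact ERel.app (ihs d) (iht d)
  | abs _ iht => intro d; exact ERel.abs (iht (d+1))
  | hap h _ ih => intro d; exact ERel.hap (hap_lift h d) (ih d)
  | @sub b c k P P' Q Q' _ _ hcond ihP ihQ =>
      intro d
      rcases Nat.lt_or_ge k d with hk | hk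
      · rw [lift_subst_hi P d k Q hk.le, lift_subst_hi P' d k Q' hk.le]
        refine ERel.sub (ihP (d+1)) (ihQ d) ?_
        rcases hcond with h1 | h1
        · left; rwa [occ_lift_lt P (d+1) k (by omega)]
        · right; exact (nf_lift_iff Q d).2 h1
      · rw [lift_subst P d k Q hk, lift_subst P' d k Q' hk]
        refine ERel.sub (ihP d) (ihQ d) ?_
        rcases hcond with h1 | h1
        · left; rwa [occ_lift_ge P d k hk]
        · right; exact (nf_lift_iff Q d).2 h1

theorem erel_var_src : ∀ {T : ℕ} {M L : Lam}, ERel T M L → ∀ x, M = var x → L = var x := by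
  intro T M L h
  induction h with
  | var y => intro x hx; exact hx ▸ rfl
  | app _ _ _ _ => intro x hx; cases hx
  | abs _ _ => intro x hx; cases hx
  | hap h _ _ =>
      intro x hx
      subst hx
      obtain ⟨a, b, h'⟩ := hap_src_app h
      cases h'
  | @sub b c k P P' Q Q' hP hQ hcond ihP ihQ =>
      intro x hx
      cases P with
      | var m =>
          have hP' : P' = var m := ihP m rfl
          subst hP'
          simp only [Lam.subst] at hx ⊢
          split_ifs at hx ⊢ with h1 h2
          · exact hx
          · exact ihQ x hx
          · exact hx
      | app a b => simp only [Lam.subst] at hx; cases hx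
      | abs a => simp only [Lam.subst] at hx; cases hx

theorem erel_abs_src : ∀ {T : ℕ} {M L : Lam}, ERel T M L → ∀ A, M = abs A →
    ∃ A' b, b ≤ T ∧ L = abs A' ∧ ERel b A A' := by
  intro T M L h
  induction h with
  | var y => intro A hA; cases hA
  | app _ _ _ _ => intro A hA; cases hA
  | @abs b t t' ht iht => intro A hA; injection hA with h'; subst h'; exact ⟨t', b, le_refl _, rfl, ht⟩
  | hap h _ _ =>
      intro A hA
      subst hA
      obtain ⟨a, b, h'⟩ := hap_src_app h
      cases h'
  | @sub b c k P P' Q Q' hP hQ hcond ihP ihQ =>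
      intro A hA
      cases P with
      | var m =>
          simp only [Lam.subst] at hA
          by_cases h1 : m < k
          · rw [if_pos h1] at hA; cases hA
          · rw [if_neg h1] at hA
            by_cases h2 : m = k
            · rw [if_pos h2] at hA
              obtain ⟨A', b', hb', hL, hE⟩ := ihQ A hA
              refine ⟨A', b', by omega, ?_, hE⟩
              have hP' : P' = var m := erel_var_src hP m rfl
              subst hP'
              simp only [Lam.subst]
              rw [if_neg (by omega), if_pos h2]
              exact hL
            · rw [if_neg h2] at hA; cases hA
      | app a b => simp only [Lam.subst] at hA; cases hA
      | abs P0 =>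
          simp only [Lam.subst] at hA
          injection hA with hA'
          obtain ⟨P0', b', hb', hP', hE⟩ := ihP P0 rfl
          subst hP'
          refine ⟨subst P0' (k+1) (lift 0 Q'), b' + c, by omega, ?_, ?_⟩
          · simp only [Lam.subst]
          · rw [← hA']
            refine ERel.sub hE (erel_lift hQ 0) ?_
            rcases hcond with h1 | h1
            · left; simpa [occ] using h1
            · right; exact (nf_lift_iff Q 0).2 h1

theorem erel_nf_eq {T : ℕ} {Q Q' : Lam} (h : ERel T Q Q') (hnf : IsNormalForm Q) : Q' = Q :=
  nf_star hnf (erel_star h)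

end P6

section P7

/-! ### inversion of ERel at applications -/

theorem erel_app_src : ∀ {T : ℕ} {M L : Lam}, ERel T M L → ∀ U V, M = app U V →
    (∀ W, HeadStep M W → SimpleHeadStep M W) →
    (∃ U' V' b c, L = app U' V' ∧ b + c ≤ T ∧ ERel b U U' ∧ ERel c V V')
    ∨ (∃ W b, Hap M W ∧ ERel b W L ∧ b + 1 ≤ T) := by
  intro T M L h
  induction h with
  | var x => intro U V hUV _; cases hUV
  | @app b c s t s' t' hs ht ihs iht =>
      intro U V hUV _
      injection hUV with h1 h2
      subst h1; subst h2
      exact Or.inl ⟨s', t', b, c, rfl, le_refl _, hs, ht⟩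
  | abs _ _ => intro U V hUV _; cases hUV
  | @hap b M' N L' h hE ih =>
      intro U V hUV _
      exact Or.inr ⟨N, b, h, hE, le_refl _⟩
  | @sub b c k P P' Q Q' hP hQ hcond ihP ihQ =>
      intro U V hUV hHS
      cases P with
      | var m =>
          simp only [Lam.subst] at hUV
          by_cases h1 : m < k
          · rw [if_pos h1] at hUV; cases hUV
          · rw [if_neg h1] at hUV
            by_cases h2 : m = k
            · rw [if_pos h2] at hUV
              -- M = subst (var m) k Q = Q
              have hMQ : subst (var m) k Q = Q := by
                simp only [Lam.subst]; rw [if_neg h1, if_pos h2]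
              have hMQ' : subst (var m) k Q' = Q' := by
                simp only [Lam.subst]; rw [if_neg h1, if_pos h2]
              have hP' : P' = var m := erel_var_src hP m rfl
              subst hP'
              rw [hMQ] at hHS ⊢
              rw [hMQ']
              rcases ihQ U V hUV hHS with d1 | d2
              · obtain ⟨U', V', b1, c1, hL, hbc, hE1, hE2⟩ := d1
                exact Or.inl ⟨U', V', b1, c1, hL, by omega, hE1, hE2⟩
              · obtain ⟨W, b1, hW, hE1, hb1⟩ := d2
                exact Or.inr ⟨W, b1, hW, hE1, by omega⟩
            · rw [if_neg h2] at hUV; cases hUV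
      | abs P0 => simp only [Lam.subst] at hUV; cases hUV
      | app P₁ P₂ =>
          simp only [Lam.subst] at hUV
          injection hUV with hU hV
          subst hU; subst hV
          have hHSP : ∀ W, HeadStep (app P₁ P₂) W → SimpleHeadStep (app P₁ P₂) W := by
            intro W hW
            have h1 := headstep_subst hW k Q
            have h2 := hHS _ h1
            exact simple_pullback hW k Q h2
          rcases ihP P₁ P₂ rfl hHSP with d1 | d2
          · obtain ⟨P₁', P₂', b1, b2, hP'eq, hbb, hE1, hE2⟩ := d1
            subst hP'eq
            rcases hcond with h1 | h1
            · -- occ k (app P₁ P₂) ≤ 1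
              simp only [occ] at h1
              by_cases h2 : occ k P₂ = 0
              · have e := occ_zero_subst_irrel (t := P₂) k Q Q' h2
                have hV' : ERel (b2 + 0) (subst P₂ k Q') (subst P₂' k Q') :=
                  ERel.sub hE2 (erel_refl Q') (Or.inl (by omega))
                rw [← e] at hV'
                have hU' : ERel (b1 + c) (subst P₁ k Q) (subst P₁' k Q') :=
                  ERel.sub hE1 hQ (Or.inl (by omega))
                refine Or.inl ⟨subst P₁' k Q', subst P₂' k Q', b1 + c, b2 + 0, ?_, by omega,
                  hU', hV'⟩
                simp only [Lam.subst]
              · have h3 : occ k P₁ = 0 := by omega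
                have e := occ_zero_subst_irrel (t := P₁) k Q Q' h3
                have hU' : ERel (b1 + 0) (subst P₁ k Q') (subst P₁' k Q') :=
                  ERel.sub hE1 (erel_refl Q') (Or.inl (by omega))
                rw [← e] at hU'
                have hV' : ERel (b2 + c) (subst P₂ k Q) (subst P₂' k Q') :=
                  ERel.sub hE2 hQ (Or.inl (by omega))
                refine Or.inl ⟨subst P₁' k Q', subst P₂' k Q', b1 + 0, b2 + c, ?_, by omega,
                  hU', hV'⟩
                simp only [Lam.subst]
            · -- Q normal
              have hQQ : Q' = Q := erel_nf_eq hQ h1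
              have hU' : ERel (b1 + c) (subst P₁ k Q) (subst P₁' k Q') :=
                ERel.sub hE1 hQ (Or.inr h1)
              have hV' : ERel (b2 + 0) (subst P₂ k Q) (subst P₂' k Q') := by
                rw [hQQ]
                exact ERel.sub hE2 (erel_refl Q) (Or.inr h1)
              refine Or.inl ⟨subst P₁' k Q', subst P₂' k Q', b1 + c, b2 + 0, ?_, by omega,
                hU', hV'⟩
              simp only [Lam.subst]
          · obtain ⟨W, b0, hW, hEW, hb0⟩ := d2
            have hMW : Hap (subst (app P₁ P₂) k Q) (subst W k Q) := hap_subst hW k Q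
            have hside : occ k W ≤ 1 ∨ IsNormalForm Q := by
              rcases hcond with h1 | h1
              · have hsimp : SimpleHeadStep (subst (app P₁ P₂) k Q) (subst W k Q) :=
                  hHS _ (hap_headstep hMW)
                exact hap_occ hW k Q hsimp h1
              · exact Or.inr h1
            refine Or.inr ⟨subst W k Q, b0 + c, hMW, ERel.sub hEW hQ hside, by omega⟩

/-! ### lists of related arguments -/

inductive ERelL : ℕ → List Lam → List Lam → Prop
  | nil : ERelL 0 [] []
  | cons {b c : ℕ} {A A' : Lam} {L L' : List Lam} :
      ERel b A A' → ERelL c L L' → ERelL (b+c) (A :: L) (A' :: L')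

theorem erell_append_one {S : ℕ} {L L' : List Lam} (h : ERelL S L L') {b : ℕ} {A A' : Lam}
    (hA : ERel b A A') : ERelL (S + b) (L ++ [A]) (L' ++ [A']) := by
  induction h with
  | nil => simpa using ERelL.cons hA ERelL.nil
  | @cons b1 c1 B B' LL LL' hB _ ih =>
      rw [show b1 + c1 + b = b1 + (c1 + b) by omega]
      exact ERelL.cons hB ih

theorem erel_neutral_inv : ∀ (args : List Lam) {T : ℕ} {y : ℕ} {L : Lam},
    ERel T (appList (var y) args) L →
    ∃ args' S, S ≤ T ∧ L = appList (var y) args' ∧ ERelL S args args' := by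
  intro args
  induction args using List.reverseRecOn with
  | nil =>
      intro T y L h
      have := erel_var_src h y rfl
      exact ⟨[], 0, by omega, this, ERelL.nil⟩
  | append_singleton L₀ a ih =>
      intro T y L h
      rw [appList_append_one] at h
      have hHS : ∀ W, HeadStep (app (appList (var y) L₀) a) W →
          SimpleHeadStep (app (appList (var y) L₀) a) W := by
        intro W hW
        exfalso
        rw [← appList_append_one] at hW
        exact appList_var_no_headstep y (L₀ ++ [a]) W hW
      rcases erel_app_src h _ _ rfl hHS with d1 | d2
      · obtain ⟨U', V', b, c, hL, hbc, hEU, hEV⟩ := d1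
        obtain ⟨args₀', S₀, hS₀, hU', hRL⟩ := ih hEU
        subst hU'
        refine ⟨args₀' ++ [V'], S₀ + c, by omega, ?_, erell_append_one hRL hEV⟩
        rw [hL, appList_append_one]
      · obtain ⟨W, b, hW, -, -⟩ := d2
        exfalso
        rw [← appList_append_one] at hW
        exact appList_var_no_headstep y (L₀ ++ [a]) W (hap_headstep hW)

theorem erel_hnf_inv : ∀ (n : ℕ) {T : ℕ} {y : ℕ} {args : List Lam} {L : Lam},
    ERel T (mkHnf n y args) L →
    ∃ args' S, S ≤ T ∧ L = mkHnf n y args' ∧ ERelL S args args' := by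
  intro n
  induction n with
  | zero => intro T y args L h; exact erel_neutral_inv args h
  | succ n ih =>
      intro T y args L h
      rw [mkHnf_succ] at h
      obtain ⟨A', b, hb, hL, hE⟩ := erel_abs_src h _ rfl
      obtain ⟨args', S, hS, hA', hRL⟩ := ih hE
      subst hA'
      exact ⟨args', S, by omega, by rw [hL, mkHnf_succ], hRL⟩

/-! ### the one-step commutation lemma -/

theorem sl1 : ∀ (M : Lam) {T : ℕ} {L M₁ : Lam}, ERel T M L → SimpleHeadStep M M₁ →
    (∃ T', T' + 1 ≤ T ∧ ERel T' M₁ L) ∨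
    (∃ L₁ T', HeadStep L L₁ ∧ ERel T' M₁ L₁ ∧ T' ≤ T ∧ (IsAbs L → IsAbs M)) := by
  intro M
  induction M with
  | var n =>
      intro T L M₁ hE hstep
      rcases simple_src_shape hstep with ⟨a, b, h⟩ | ⟨a, h⟩ <;> cases h
  | abs M₀ ih =>
      intro T L M₁ hE hstep
      cases hstep with
      | abs hstep₀ =>
          obtain ⟨L₀, b, hb, rfl, hE₀⟩ := erel_abs_src hE M₀ rfl
          rcases ih hE₀ hstep₀ with ⟨T', hT', hE'⟩ | ⟨L₁₀, T', hstepL, hE', hT', habs⟩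
          · exact Or.inl ⟨T', by omega, ERel.abs hE'⟩
          · exact Or.inr ⟨abs L₁₀, T', HeadStep.abs hstepL, ERel.abs hE', by omega,
              fun _ => trivial⟩
  | app U V ihU ihV =>
      intro T L M₁ hE hstep
      have hHS : ∀ W, HeadStep (app U V) W → SimpleHeadStep (app U V) W := by
        intro W hW
        have := headstep_det hW (shs_head hstep)
        subst this
        exact hstep
      rcases erel_app_src hE U V rfl hHS with d1 | d2
      · obtain ⟨U', V', b, c, rfl, hbc, hEU, hEV⟩ := d1
        cases hstep with
        | beta A _ hcond =>
            obtain ⟨A', b', hb', rfl, hEA⟩ := erel_abs_src hEU A rfl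
            refine Or.inr ⟨subst A' 0 V', b' + c, HeadStep.beta A' V',
              ERel.sub hEA hEV hcond, by omega, fun h => h.elim⟩
        | app _ hna hstepU =>
            rcases ihU hEU hstepU with ⟨T', hT', hE'⟩ | ⟨U'₁, T', hstepL, hE', hT', habs⟩
            · exact Or.inl ⟨T' + c, by omega, ERel.app hE' hEV⟩
            · have hnaU' : ¬ IsAbs U' := fun h => hna (habs h)
              exact Or.inr ⟨app U'₁ V', T' + c, HeadStep.app V' hnaU' hstepL,
                ERel.app hE' hEV, by omega, fun h => h.elim⟩
      · obtain ⟨W, b, hW, hEW, hb⟩ := d2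
        have := headstep_det (hap_headstep hW) (shs_head hstep)
        subst this
        exact Or.inl ⟨b, hb, hEW⟩

/-! ### the main projection theorem -/

theorem grand : ∀ (k : ℕ) {M L : Lam} {T n y : ℕ} {margs : List Lam},
    SimpleTerm M → SimpleSeq k M (mkHnf n y margs) → ERel T M L →
    ∃ k' margs' S, HeadSteps k' L (mkHnf n y margs') ∧ k' ≤ k ∧ (k - k') + S ≤ T ∧
      ERelL S margs margs' := by
  intro k
  induction k with
  | zero =>
      intro M L T n y margs hM hseq hE
      cases hseq
      obtain ⟨args', S, hS, rfl, hRL⟩ := erel_hnf_inv n hE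
      exact ⟨0, args', S, rfl, le_refl _, by omega, hRL⟩
  | succ k ih =>
      intro M L T n y margs hM hseq hE
      obtain ⟨M₁, hstep, hseq'⟩ := hseq
      have hM₁ : SimpleTerm M₁ := simple_head_reduct hM (shs_head hstep)
      rcases sl1 M hE hstep with ⟨T', hT', hE'⟩ | ⟨L₁, T', hstepL, hE', hT', -⟩
      · obtain ⟨k', margs', S, h1, h2, h3, h4⟩ := ih hM₁ hseq' hE'
        exact ⟨k', margs', S, h1, by omega, by omega, h4⟩
      · obtain ⟨k'', margs', S, h1, h2, h3, h4⟩ := ih hM₁ hseq' hE'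
        exact ⟨k'' + 1, margs', S, ⟨L₁, hstepL, h1⟩, by omega, by omega, h4⟩

end P7

section P8

/-! ### position list lemmas -/

theorem ones2_inj : ∀ (a : ℕ) {b : ℕ} {q q' : List ℕ},
    List.replicate a 1 ++ 2 :: q = List.replicate b 1 ++ 2 :: q' → a = b ∧ q = q' := by
  intro a
  induction a with
  | zero =>
      intro b q q' h
      cases b with
      | zero => simp at h; exact ⟨rfl, h⟩
      | succ b => simp [List.replicate] at h
  | succ a ih =>
      intro b q q' h
      cases b with
      | zero => simp [List.replicate] at h
      | succ b =>
          simp only [List.replicate, List.cons_append] at h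
          injection h with _ h'
          obtain ⟨h1, h2⟩ := ih h'
          exact ⟨by omega, h2⟩

/-! ### CBT inversion -/

theorem cbt_hashnf {M : Lam} {p : List ℕ} {o : BTN} {a : Option ℕ} (hd : CBT M p o a) :
    ∀ k₀, a = some k₀ → HasHnf M := by
  induction hd with
  | bot h => intro k₀ hk; cases hk
  | @lam M k n y args i hs hi => intro k₀ hk; exact ⟨k, _, hs, n, y, args, rfl⟩
  | @app M k n y args j hs hj => intro k₀ hk; exact ⟨k, _, hs, n, y, args, rfl⟩
  | @var M k n y args hs => intro k₀ hk; exact ⟨k, _, hs, n, y, args, rfl⟩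
  | @child M k n y args i q o a hs hi hq ih => intro k₀ hk; exact ⟨k, _, hs, n, y, args, rfl⟩

theorem block_unique {M : Lam} {k n y : ℕ} {args : List Lam} {k₁ n₁ y₁ : ℕ} {args₁ : List Lam}
    (h1 : HeadSteps k₁ M (mkHnf n₁ y₁ args₁)) (hb : HeadSteps k M (mkHnf n y args)) :
    k₁ = k ∧ n₁ = n ∧ y₁ = y ∧ args₁ = args := by
  obtain ⟨hk, hH⟩ := headsteps_unique k₁ k M _ _ h1 hb ⟨n₁, y₁, args₁, rfl⟩ ⟨n, y, args, rfl⟩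
  obtain ⟨h2, h3, h4⟩ := mkHnf_inj _ _ _ _ _ _ hH
  exact ⟨hk, h2, h3, h4⟩

theorem cbt_inv {M : Lam} {p : List ℕ} {o : BTN} {a : Option ℕ} (hd : CBT M p o a)
    {k n y : ℕ} {args : List Lam} (hb : HeadSteps k M (mkHnf n y args)) :
    (∃ i, i < n ∧ p = List.replicate i 0 ∧ o = BTN.lam ∧
        a = (if i = 0 then some k else none)) ∨
    (∃ j, j < args.length ∧ p = List.replicate n 0 ++ List.replicate j 1 ∧ o = BTN.app ∧
        a = (if n = 0 ∧ j = 0 then some k else none)) ∨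
    (p = List.replicate n 0 ++ List.replicate args.length 1 ∧ o = BTN.var y ∧
        a = (if n = 0 ∧ args.length = 0 then some k else none)) ∨
    (∃ i, ∃ h : i < args.length, ∃ q,
        p = List.replicate n 0 ++ List.replicate (args.length - 1 - i) 1 ++ 2 :: q ∧
        CBT (args.get ⟨i, h⟩) q o a) := by
  cases hd with
  | bot h => exact absurd ⟨k, _, hb, n, y, args, rfl⟩ h
  | @lam M k₁ n₁ y₁ args₁ i hs hi =>
      obtain ⟨rfl, rfl, rfl, rfl⟩ := block_unique hs hb
      exact Or.inl ⟨i, hi, rfl, rfl, rfl⟩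
  | @app M k₁ n₁ y₁ args₁ j hs hj =>
      obtain ⟨rfl, rfl, rfl, rfl⟩ := block_unique hs hb
      exact Or.inr (Or.inl ⟨j, hj, rfl, rfl, rfl⟩)
  | @var M k₁ n₁ y₁ args₁ hs =>
      obtain ⟨rfl, rfl, rfl, rfl⟩ := block_unique hs hb
      exact Or.inr (Or.inr (Or.inl ⟨rfl, rfl, rfl⟩))
  | @child M k₁ n₁ y₁ args₁ i q o a hs hi hq =>
      obtain ⟨rfl, rfl, rfl, rfl⟩ := block_unique hs hb
      exact Or.inr (Or.inr (Or.inr ⟨i, hi, q, rfl, hq⟩))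

theorem cbt_nohnf_inv {M : Lam} {p : List ℕ} {o : BTN} {a : Option ℕ} (hd : CBT M p o a)
    (h : ¬ HasHnf M) : p = [] ∧ o = BTN.bot ∧ a = none := by
  cases hd with
  | bot _ => exact ⟨rfl, rfl, rfl⟩
  | @lam M k n y args i hs hi => exact absurd ⟨k, _, hs, n, y, args, rfl⟩ h
  | @app M k n y args j hs hj => exact absurd ⟨k, _, hs, n, y, args, rfl⟩ h
  | @var M k n y args hs => exact absurd ⟨k, _, hs, n, y, args, rfl⟩ h
  | @child M k n y args i q o a hs hi hq => exact absurd ⟨k, _, hs, n, y, args, rfl⟩ h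

theorem cbt_some_shape {M : Lam} {p : List ℕ} {o : BTN} {k₀ : ℕ}
    (hd : CBT M p o (some k₀)) {k n y : ℕ} {args : List Lam}
    (hb : HeadSteps k M (mkHnf n y args)) :
    (p = [] ∧ k₀ = k) ∨
    (∃ i, ∃ h : i < args.length, ∃ q,
        p = List.replicate n 0 ++ List.replicate (args.length - 1 - i) 1 ++ 2 :: q ∧
        CBT (args.get ⟨i, h⟩) q o (some k₀)) := by
  rcases cbt_inv hd hb with ⟨i, hi, hp, ho, ha⟩ | ⟨j, hj, hp, ho, ha⟩ | ⟨hp, ho, ha⟩ | h4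
  · split_ifs at ha with h0
    · subst h0; injection ha with ha'; exact Or.inl ⟨by simpa using hp, ha'⟩
  · split_ifs at ha with h0
    · obtain ⟨hn0, hj0⟩ := h0
      injection ha with ha'
      refine Or.inl ⟨?_, ha'⟩
      rw [hp, hn0, hj0]; rfl
  · split_ifs at ha with h0
    · obtain ⟨hn0, hm0⟩ := h0
      injection ha with ha'
      refine Or.inl ⟨?_, ha'⟩
      rw [hp, hn0, hm0]; rfl
  · exact Or.inr h4

/-- the root of a block is annotated -/
theorem cbt_root_some {L : Lam} {k n y : ℕ} {args : List Lam}
    (hb : HeadSteps k L (mkHnf n y args)) : ∃ o, CBT L [] o (some k) := by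
  cases n with
  | succ n =>
      refine ⟨BTN.lam, ?_⟩
      have := CBT.lam (i := 0) hb (by omega)
      simpa using this
  | zero =>
      cases hargs : args with
      | cons A rest =>
          refine ⟨BTN.app, ?_⟩
          have := CBT.app (j := 0) hb (by rw [hargs]; simp)
          simpa using this
      | nil =>
          refine ⟨BTN.var y, ?_⟩
          have := CBT.var hb
          subst hargs
          simpa using this

end P8

section P9

theorem simple_block {M : Lam} (hM : SimpleTerm M) (hH : HasHnf M) :
    ∃ k n y args, SimpleSeq k M (mkHnf n y args) ∧ ∀ A ∈ args, SimpleTerm A := by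
  rcases simple_dest hM with h | ⟨k, n, y, args, h1, h2⟩
  · exact absurd hH h
  · exact ⟨k, n, y, args, h1, h2⟩

theorem erell_length {S : ℕ} {L L' : List Lam} (h : ERelL S L L') : L'.length = L.length := by
  induction h with
  | nil => rfl
  | cons _ _ ih => simpa using ih

theorem erell_get {S : ℕ} {L L' : List Lam} (h : ERelL S L L') :
    ∀ i (hi : i < L.length) (hi' : i < L'.length),
      ∃ b, b ≤ S ∧ ERel b (L.get ⟨i, hi⟩) (L'.get ⟨i, hi'⟩) := by
  induction h with
  | nil => intro i hi hi'; simp at hi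
  | @cons b c A A' LL LL' hA hL ih =>
      intro i hi hi'
      cases i with
      | zero => exact ⟨b, by omega, hA⟩
      | succ i =>
          obtain ⟨b', hb', hE⟩ := ih i (by simpa using hi) (by simpa using hi')
          exact ⟨b', by omega, hE⟩

theorem erell_budgets {S : ℕ} {L L' : List Lam} (h : ERelL S L L') :
    ∃ bs : List ℕ, bs.length = L.length ∧ bs.sum = S ∧
      ∀ i (hi : i < L.length) (hi' : i < L'.length),
        ERel (bs.getD i 0) (L.get ⟨i, hi⟩) (L'.get ⟨i, hi'⟩) := by
  induction h with
  | nil => refine ⟨[], rfl, rfl, ?_⟩; intro i hi hi'; simp at hi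
  | @cons b c A A' LL LL' hA hL ih =>
      obtain ⟨bs, h1, h2, h3⟩ := ih
      refine ⟨b :: bs, by simpa using h1, by simp [h2], ?_⟩
      intro i hi hi'
      cases i with
      | zero => simpa using hA
      | succ i => simpa using h3 i (by simpa using hi) (by simpa using hi')

/-! ### same Böhm trees -/

theorem cbt_transfer : ∀ (len : ℕ) (p : List ℕ), p.length ≤ len →
    ∀ {M L : Lam} {T : ℕ}, SimpleTerm M → ERel T M L →
    ∀ o, (∃ a, CBT M p o a) ↔ (∃ a', CBT L p o a') := by
  intro len
  induction len using Nat.strong_induction_on with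
  | _ len ih =>
  intro p hp M L T hM hE o
  by_cases hH : HasHnf M
  · obtain ⟨k, n, y, margs, hseq, hargsimp⟩ := simple_block hM hH
    have hbM : HeadSteps k M (mkHnf n y margs) := simpleseq_headsteps hseq
    obtain ⟨k', margs', S, hbL, hk', hbound, hRL⟩ := grand k hM hseq hE
    have hlen : margs'.length = margs.length := erell_length hRL
    constructor
    · rintro ⟨a, hd⟩
      rcases cbt_inv hd hbM with ⟨i, hi, rfl, rfl, rfl⟩ | ⟨j, hj, rfl, rfl, rfl⟩ |
        ⟨rfl, rfl, rfl⟩ | ⟨i, hi, q, rfl, hq⟩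
      · exact ⟨_, CBT.lam hbL hi⟩
      · exact ⟨_, CBT.app hbL (by omega)⟩
      · have hv := CBT.var hbL
        rw [hlen] at hv
        exact ⟨_, hv⟩
      · have hi' : i < margs'.length := by omega
        obtain ⟨b, hb, hEc⟩ := erell_get hRL i hi hi'
        have hqlen : q.length < len := by
          simp only [List.length_append, List.length_replicate, List.length_cons] at hp
          omega
        have hMc : SimpleTerm (margs.get ⟨i, hi⟩) := hargsimp _ (List.get_mem _ _)
        obtain ⟨a', hq'⟩ := (ih q.length hqlen q (le_refl _) hMc hEc o).1 ⟨_, hq⟩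
        refine ⟨a', ?_⟩
        have := CBT.child hbL hi' hq'
        rw [hlen] at this
        exact this
    · rintro ⟨a, hd⟩
      rcases cbt_inv hd hbL with ⟨i, hi, rfl, rfl, rfl⟩ | ⟨j, hj, rfl, rfl, rfl⟩ |
        ⟨rfl, rfl, rfl⟩ | ⟨i, hi, q, rfl, hq⟩
      · exact ⟨_, CBT.lam hbM hi⟩
      · exact ⟨_, CBT.app hbM (by omega)⟩
      · have hv := CBT.var hbM
        rw [← hlen] at hv
        exact ⟨_, hv⟩
      · have hi' : i < margs.length := by omega
        obtain ⟨b, hb, hEc⟩ := erell_get hRL i hi' hi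
        have hqlen : q.length < len := by
          simp only [List.length_append, List.length_replicate, List.length_cons] at hp
          omega
        have hMc : SimpleTerm (margs.get ⟨i, hi'⟩) := hargsimp _ (List.get_mem _ _)
        obtain ⟨a', hq'⟩ := (ih q.length hqlen q (le_refl _) hMc hEc o).2 ⟨_, hq⟩
        refine ⟨a', ?_⟩
        have := CBT.child hbM hi' hq'
        rw [← hlen] at this
        exact this
  · have hL : ¬ HasHnf L := fun h => hH (hnf_reflect (erel_star hE) h)
    constructor
    · rintro ⟨a, hd⟩
      obtain ⟨rfl, rfl, rfl⟩ := cbt_nohnf_inv hd hH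
      exact ⟨none, CBT.bot hL⟩
    · rintro ⟨a, hd⟩
      obtain ⟨rfl, rfl, rfl⟩ := cbt_nohnf_inv hd hL
      exact ⟨none, CBT.bot hH⟩

/-! ### annotations transfer forwards -/

theorem cbt_some_forward : ∀ (len : ℕ) (p : List ℕ), p.length ≤ len →
    ∀ {M L : Lam} {T : ℕ} {o : BTN} {k₀ : ℕ}, SimpleTerm M → ERel T M L →
    CBT M p o (some k₀) → ∃ o' k', CBT L p o' (some k') := by
  intro len
  induction len using Nat.strong_induction_on with
  | _ len ih =>
  intro p hp M L T o k₀ hM hE hd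
  have hH : HasHnf M := cbt_hashnf hd k₀ rfl
  obtain ⟨k, n, y, margs, hseq, hargsimp⟩ := simple_block hM hH
  have hbM : HeadSteps k M (mkHnf n y margs) := simpleseq_headsteps hseq
  obtain ⟨k', margs', S, hbL, hk', hbound, hRL⟩ := grand k hM hseq hE
  have hlen : margs'.length = margs.length := erell_length hRL
  rcases cbt_some_shape hd hbM with ⟨rfl, rfl⟩ | ⟨i, hi, q, rfl, hq⟩
  · obtain ⟨o', ho'⟩ := cbt_root_some hbL
    exact ⟨o', k', ho'⟩
  · have hi' : i < margs'.length := by omega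
    obtain ⟨b, hb, hEc⟩ := erell_get hRL i hi hi'
    have hqlen : q.length < len := by
      simp only [List.length_append, List.length_replicate, List.length_cons] at hp
      omega
    have hMc : SimpleTerm (margs.get ⟨i, hi⟩) := hargsimp _ (List.get_mem _ _)
    obtain ⟨o', kq, hq'⟩ := ih q.length hqlen q (le_refl _) hMc hEc hq
    refine ⟨o', kq, ?_⟩
    have := CBT.child hbL hi' hq'
    rw [hlen] at this
    exact this

end P9

section P10

def prefOf (n m i : ℕ) : List ℕ := List.replicate n 0 ++ List.replicate (m - 1 - i) 1 ++ [2]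

def stripOf (n m i : ℕ) (p : List ℕ) : Option (List ℕ) :=
  if (prefOf n m i).isPrefixOf p then some (p.drop (prefOf n m i).length) else none

theorem prefOf_ne_nil (n m i : ℕ) : prefOf n m i ≠ [] := by
  simp [prefOf]

theorem stripOf_nil (n m i : ℕ) : stripOf n m i [] = none := by
  rw [stripOf, if_neg]
  intro h
  have := List.isPrefixOf_iff_prefix.1 h
  have := List.prefix_nil.1 this
  exact prefOf_ne_nil n m i this

theorem stripOf_eq_some {n m i : ℕ} {p q : List ℕ} :
    stripOf n m i p = some q ↔ p = prefOf n m i ++ q := by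
  constructor
  · intro h
    rw [stripOf] at h
    split_ifs at h with hpre
    · obtain ⟨t, ht⟩ := List.isPrefixOf_iff_prefix.1 hpre
      injection h with h'
      rw [← ht, List.drop_left] at h'
      rw [← ht, h']
  · intro h
    subst h
    rw [stripOf, if_pos (List.isPrefixOf_iff_prefix.2 (List.prefix_append _ _)), List.drop_left]

theorem pref_append_eq {n m i : ℕ} {q : List ℕ} :
    prefOf n m i ++ q = List.replicate n 0 ++ List.replicate (m - 1 - i) 1 ++ 2 :: q := by
  simp [prefOf, List.append_assoc]

theorem pos_decomp_unique {n a b : ℕ} {q q' : List ℕ}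
    (h : List.replicate n 0 ++ List.replicate a 1 ++ 2 :: q =
         List.replicate n 0 ++ List.replicate b 1 ++ 2 :: q') : a = b ∧ q = q' := by
  rw [List.append_assoc, List.append_assoc] at h
  have h2 := List.append_cancel_left h
  exact ones2_inj a h2

theorem sum_getD (bs : List ℕ) : ∑ i ∈ Finset.range bs.length, bs.getD i 0 = bs.sum := by
  induction bs with
  | nil => simp
  | cons b bs ih =>
      rw [List.length_cons, Finset.sum_range_succ']
      simp only [List.getD_cons_succ, List.getD_cons_zero, List.sum_cons]
      rw [ih]
      omega

theorem count_split (m : ℕ) (f : ℕ → List ℕ → Option (List ℕ)) (hf : ∀ i, f i [] = none) :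
    ∀ ps : List (List ℕ), (∀ p ∈ ps, p ≠ [] → ∃ i, i < m ∧ (f i p).isSome) → ps.Nodup →
    ps.length ≤ (if ([] : List ℕ) ∈ ps then 1 else 0) +
      ∑ i ∈ Finset.range m, (ps.filterMap (f i)).length := by
  intro ps
  induction ps with
  | nil => intro _ _; simp
  | cons p ps' ih =>
      intro helem hnd
      obtain ⟨hpnot, hnd'⟩ := List.nodup_cons.1 hnd
      have IH := ih (fun p hp hne => helem p (List.mem_cons_of_mem _ hp) hne) hnd'
      by_cases hpnil : p = []
      · subst hpnil
        have hind : ([] : List ℕ) ∉ ps' := hpnot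
        rw [if_neg hind] at IH
        have hfm : ∀ i, ([] :: ps').filterMap (f i) = ps'.filterMap (f i) := by
          intro i
          rw [List.filterMap_cons, hf i]
        rw [if_pos (List.mem_cons_self)]
        calc ([] :: ps').length = ps'.length + 1 := by simp
        _ ≤ (0 + ∑ i ∈ Finset.range m, (ps'.filterMap (f i)).length) + 1 := by omega
        _ ≤ 1 + ∑ i ∈ Finset.range m, (([] :: ps').filterMap (f i)).length := by
              simp only [hfm]
              try omega
      · obtain ⟨i₀, hi₀, hsome⟩ := helem p (List.mem_cons_self) hpnil
        have hpoint : ∀ i ∈ Finset.range m,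
            (ps'.filterMap (f i)).length ≤ ((p :: ps').filterMap (f i)).length := by
          intro i _
          rw [List.filterMap_cons]
          cases hfi : f i p <;> simp
        have hstrict : (ps'.filterMap (f i₀)).length < ((p :: ps').filterMap (f i₀)).length := by
          rw [List.filterMap_cons]
          obtain ⟨q, hq⟩ := Option.isSome_iff_exists.1 hsome
          rw [hq]
          simp
        have hsum : ∑ i ∈ Finset.range m, (ps'.filterMap (f i)).length <
            ∑ i ∈ Finset.range m, ((p :: ps').filterMap (f i)).length :=
          Finset.sum_lt_sum hpoint ⟨i₀, Finset.mem_range.2 hi₀, hstrict⟩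
        have hind : (if ([] : List ℕ) ∈ ps' then 1 else 0) ≤
            (if ([] : List ℕ) ∈ p :: ps' then 1 else 0) := by
          split_ifs with h1 h2 <;> first | omega | (exact absurd (List.mem_cons_of_mem _ h1) h2)
        calc (p :: ps').length = ps'.length + 1 := by simp
        _ ≤ ((if ([] : List ℕ) ∈ ps' then 1 else 0) +
              ∑ i ∈ Finset.range m, (ps'.filterMap (f i)).length) + 1 := by omega
        _ ≤ (if ([] : List ℕ) ∈ p :: ps' then 1 else 0) +
              ∑ i ∈ Finset.range m, ((p :: ps').filterMap (f i)).length := by omega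

/-- positions where the annotations differ -/
def Diff (M L : Lam) (p : List ℕ) : Prop :=
  ∃ o₁ k₁ o₂ k₂, CBT M p o₁ (some k₁) ∧ CBT L p o₂ (some k₂) ∧ k₁ ≠ k₂

theorem count_diff : ∀ (len : ℕ) {M L : Lam} {T : ℕ}, SimpleTerm M → ERel T M L →
    ∀ ps : List (List ℕ), ps.Nodup → (∀ p ∈ ps, p.length ≤ len ∧ Diff M L p) →
    ps.length ≤ T := by
  intro len
  induction len using Nat.strong_induction_on with
  | _ len ih =>
  intro M L T hM hE ps hnd hps
  by_cases hnil : ps = []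
  · subst hnil; simp
  · obtain ⟨p₀, hp₀⟩ := List.exists_mem_of_ne_nil ps hnil
    obtain ⟨-, o₁, k₁, o₂, k₂, hdM0, hdL0, hk0⟩ := hps p₀ hp₀
    have hH : HasHnf M := cbt_hashnf hdM0 k₁ rfl
    obtain ⟨k, n, y, margs, hseq, hargsimp⟩ := simple_block hM hH
    have hbM : HeadSteps k M (mkHnf n y margs) := simpleseq_headsteps hseq
    obtain ⟨k', margs', S, hbL, hk', hbound, hRL⟩ := grand k hM hseq hE
    have hlen : margs'.length = margs.length := erell_length hRL
    obtain ⟨bs, hbs_len, hbs_sum, hbs_get⟩ := erell_budgets hRL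
    set m := margs.length with hm
    -- each diff position decomposes
    have hdec : ∀ p ∈ ps, p ≠ [] → ∃ i, i < m ∧ ∃ q, p = prefOf n m i ++ q ∧
        ∃ (hi : i < m), Diff (margs.get ⟨i, hi⟩) (margs'.get ⟨i, by omega⟩) q := by
      intro p hp hne
      obtain ⟨-, oA, kA, oB, kB, hdM, hdL, hkk⟩ := hps p hp
      rcases cbt_some_shape hdM hbM with ⟨rfl, -⟩ | ⟨i, hi, q, hpeq, hq⟩
      · exact absurd rfl hne
      · refine ⟨i, hi, q, by rw [hpeq, pref_append_eq], hi, ?_⟩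
        rcases cbt_some_shape hdL hbL with ⟨hpe, -⟩ | ⟨i₃, hi₃, q₃, hpeq', hq₃⟩
        · exact absurd hpe hne
        · have heq : List.replicate n 0 ++ List.replicate (m - 1 - i) 1 ++ 2 :: q =
              List.replicate n 0 ++ List.replicate (margs'.length - 1 - i₃) 1 ++ 2 :: q₃ := by
            rw [← hpeq, ← hpeq']
          obtain ⟨h1, h2⟩ := pos_decomp_unique heq
          have hii : i₃ = i := by omega
          subst hii
          subst h2
          exact ⟨oA, kA, oB, kB, hq, hq₃, hkk⟩
    have hsplit := count_split m (stripOf n m) (stripOf_nil n m) ps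
      (fun p hp hne => by
        obtain ⟨i, hi, q, hpeq, -⟩ := hdec p hp hne
        exact ⟨i, hi, by rw [stripOf_eq_some.2 hpeq]; rfl⟩) hnd
    -- bound for the root
    have hroot : (if ([] : List ℕ) ∈ ps then 1 else 0) ≤ k - k' := by
      split_ifs with hmem
      · obtain ⟨-, oA, kA, oB, kB, hdM, hdL, hkk⟩ := hps [] hmem
        rcases cbt_some_shape hdM hbM with ⟨-, rfl⟩ | ⟨i, hi, q, hpeq, -⟩
        · rcases cbt_some_shape hdL hbL with ⟨-, rfl⟩ | ⟨i, hi, q, hpeq, -⟩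
          · omega
          · simp at hpeq
        · simp at hpeq
      · omega
    -- bound for each child
    have hchild : ∀ i ∈ Finset.range m, (ps.filterMap (stripOf n m i)).length ≤ bs.getD i 0 := by
      intro i hirange
      have hi : i < m := Finset.mem_range.1 hirange
      rcases Nat.eq_zero_or_pos len with hlen0 | hlenpos
      · have : ps.filterMap (stripOf n m i) = [] := by
          rw [List.eq_nil_iff_forall_not_mem]
          intro q hq
          obtain ⟨p, hpmem, hstrip⟩ := List.mem_filterMap.1 hq
          have hpq := stripOf_eq_some.1 hstrip
          have := (hps p hpmem).1
          rw [hpq] at this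
          simp [prefOf, hlen0] at this
        rw [this]
        simp
      · have hi' : i < margs'.length := by omega
        refine ih (len - 1) (by omega) (hargsimp _ (List.get_mem _ _))
          (hbs_get i hi hi') _ ?_ ?_
        · refine List.Nodup.filterMap ?_ hnd
          intro p p' q hq hq'
          rw [Option.mem_def] at hq hq'
          rw [stripOf_eq_some.1 hq, stripOf_eq_some.1 hq']
        · intro q hq
          obtain ⟨p, hpmem, hstrip⟩ := List.mem_filterMap.1 hq
          have hpq := stripOf_eq_some.1 hstrip
          have hne : p ≠ [] := by
            rw [hpq]; exact fun h => prefOf_ne_nil n m i (List.append_eq_nil_iff.1 h).1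
          obtain ⟨i₂, hi₂, q₂, hpeq₂, hi₂', hdiff⟩ := hdec p hpmem hne
          have heq2 : prefOf n m i ++ q = prefOf n m i₂ ++ q₂ := by rw [← hpq, ← hpeq₂]
          rw [pref_append_eq, pref_append_eq] at heq2
          obtain ⟨h1, h2⟩ := pos_decomp_unique heq2
          have hii : i₂ = i := by omega
          subst hii
          subst h2
          constructor
          · have hplen := (hps p hpmem).1
            rw [hpq] at hplen
            simp only [List.length_append, prefOf, List.length_replicate,
              List.length_cons] at hplen
            simp at hplen
            omega
          · exact hdiff
    have hsum_le : ∑ i ∈ Finset.range m, (ps.filterMap (stripOf n m i)).length ≤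
        ∑ i ∈ Finset.range m, bs.getD i 0 := Finset.sum_le_sum hchild
    have hsum_eq : ∑ i ∈ Finset.range m, bs.getD i 0 = bs.sum := by
      rw [← hbs_len] at hm ⊢ -- m = bs.length
      exact sum_getD bs
    omega

end P10

section P11

theorem simple_star_samebt {M L : Lam} (hM : SimpleTerm M) (h : BetaStar M L) : SameBT M L := by
  obtain ⟨T, hT⟩ := star_stt h
  have hE := stt_erel hT
  intro p o
  exact cbt_transfer p.length p (le_refl _) hM hE o

theorem simple_star_anneq {M L : Lam} (hM : SimpleTerm M) (h : BetaStar M L) :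
    ∃ l, AnnEqFrom l M L := by
  obtain ⟨T, hT⟩ := star_stt h
  have hE := stt_erel hT
  by_contra hno
  have key : ∀ l : ℕ, ∃ p, l ≤ p.length ∧ Diff M L p := by
    intro l
    by_contra h2
    push_neg at h2
    refine hno ⟨l, ?_⟩
    intro p o₁ o₂ k₁ k₂ hl hd₁ hd₂
    by_contra hne
    exact (h2 p hl) ⟨o₁, k₁, o₂, k₂, hd₁, hd₂, hne⟩
  let F : ℕ → List ℕ := fun i => Nat.rec (key 0).choose
    (fun _ prev => (key (prev.length + 1)).choose) i
  have hF0 : ∀ i, Diff M L (F i) := by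
    intro i
    cases i with
    | zero => exact (key 0).choose_spec.2
    | succ i => exact (key ((F i).length + 1)).choose_spec.2
  have hFs : ∀ i, (F i).length < (F (i+1)).length := by
    intro i
    have := (key ((F i).length + 1)).choose_spec.1
    simpa [F] using this
  have hFmono : ∀ i j, i < j → (F i).length < (F j).length := by
    intro i j hij
    induction j with
    | zero => omega
    | succ j ihj =>
        rcases Nat.lt_or_ge i j with h' | h'
        · exact lt_trans (ihj h') (hFs j)
        · have : i = j := by omega
          subst this
          exact hFs i
  have hFinj : ∀ i j, F i = F j → i = j := by
    intro i j hFij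
    rcases lt_trichotomy i j with h' | h' | h'
    · have := hFmono i j h'; rw [hFij] at this; omega
    · exact h'
    · have := hFmono j i h'; rw [hFij] at this; omega
  have hlenle : ∀ i, i ≤ T → (F i).length ≤ (F T).length := by
    intro i hi
    rcases Nat.lt_or_ge i T with h' | h'
    · exact (hFmono i T h').le
    · have : i = T := by omega
      subst this
      exact le_refl _
  have hcount := count_diff (F T).length hM hE ((List.range (T+1)).map F)
    (by
      refine List.Nodup.map_on ?_ List.nodup_range
      intro x hx y hy hxy
      exact hFinj x y hxy)
    (by
      intro p hp
      obtain ⟨i, hi, rfl⟩ := List.mem_map.1 hp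
      have hiT : i ≤ T := by
        have := List.mem_range.1 hi
        omega
      exact ⟨hlenle i hiT, hF0 i⟩)
  rw [List.length_map, List.length_range] at hcount
  omega

theorem simple_common_matches {M N L : Lam} (hM : SimpleTerm M) (hN : SimpleTerm N)
    (h1 : BetaStar M L) (h2 : BetaStar N L) : MatchesEventually M N := by
  have hSM : SameBT M L := simple_star_samebt hM h1
  have hSN : SameBT N L := simple_star_samebt hN h2
  obtain ⟨l₁, hA1⟩ := simple_star_anneq hM h1
  obtain ⟨l₂, hA2⟩ := simple_star_anneq hN h2
  obtain ⟨T₁, hT₁⟩ := star_stt h1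
  have hE₁ := stt_erel hT₁
  refine ⟨fun p o => (hSM p o).trans (hSN p o).symm, max l₁ l₂, ?_⟩
  intro p o₁ o₂ k₁ k₂ hl hd₁ hd₂
  obtain ⟨o₃, k₃, hd₃⟩ := cbt_some_forward p.length p (le_refl _) hM hE₁ hd₁
  have e1 : k₁ = k₃ := hA1 p o₁ o₃ k₁ k₃ (by omega) hd₁ hd₃
  have e2 : k₂ = k₃ := hA2 p o₂ o₃ k₂ k₃ (by omega) hd₂ hd₃
  omega

/-- simple terms that do not match eventually are not β-convertible. -/
theorem discrimination_simple_simple (M N : Lam) (hM : SimpleTerm M) (hN : SimpleTerm N)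
    (h : ¬ MatchesEventually M N) : ¬ Conv M N := by
  intro hconv
  obtain ⟨L, h1, h2⟩ := church_rosser hconv
  exact h (simple_common_matches hM hN h1 h2)

end P11

end Lam
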